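/- arXiv:2405.10742 — 4 statements merged into one kernel-verified Lean document; each statement's English description precedes it below -/
import Mathlib

section
/- Let n be a positive integer and a > 1 be such that n/a is a positive integer, and let p > 0 satisfy a·p ≤ 1. Then for every real x with 0 ≤ x ≤ n·p − 1, F_{n,p}(x) > F_{n/a, a·p}(x). -/
/-- The probability mass function of the Binomial(n, p) distribution. -/
noncomputable def binomPMF (n : ℕ) (p : ℝ) (k : ℕ) : ℝ :=
  (n.choose k : ℝ) * p ^ k * (1 - p) ^ (n - k)

/-- The cumulative distribution function of the Binomial(n, p) distribution,
`F_{n,p}(x) = P(Bin(n,p) ≤ x)`. -/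
noncomputable def binomCDF (n : ℕ) (p : ℝ) (x : ℝ) : ℝ :=
  ∑ k ∈ Finset.range (n + 1), if (k : ℝ) ≤ x then binomPMF n p k else 0

/-- The quantile function `F_{n,p}⁻¹(u) = inf {x : F_{n,p}(x) ≥ u}`. -/
noncomputable def binomQuantile (n : ℕ) (p : ℝ) (u : ℝ) : ℝ :=
  sInf {x : ℝ | u ≤ binomCDF n p x}


open Finset

/-- Partial sum of binomial pmf up to k. -/
noncomputable def auxFk (n : ℕ) (p : ℝ) (k : ℕ) : ℝ :=
  ∑ i ∈ Finset.range (k+1), binomPMF n p i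

lemma auxPascal (n : ℕ) (p : ℝ) (i : ℕ) :
    binomPMF (n+1) p (i+1) = p * binomPMF n p i + (1-p) * binomPMF n p (i+1) := by
  unfold binomPMF
  rcases le_or_gt (i+1) n with h | h
  · have h1 : n + 1 - (i+1) = (n - (i+1)) + 1 := by omega
    have h2 : n - i = (n - (i+1)) + 1 := by omega
    rw [Nat.choose_succ_succ, h1, h2]
    push_cast
    ring
  · rcases eq_or_lt_of_le (Nat.le_of_lt_succ h) with h' | h'
    · subst h'
      simp [Nat.choose_self, Nat.choose_succ_self]
      ring
    · rw [Nat.choose_eq_zero_of_lt (by omega), Nat.choose_eq_zero_of_lt (by omega),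
        Nat.choose_eq_zero_of_lt (by omega)]
      simp

lemma auxFk_succ (n k : ℕ) (p : ℝ) :
    auxFk (n+1) p k = auxFk n p k - p * binomPMF n p k := by
  induction k with
  | zero =>
      simp [auxFk, binomPMF, pow_succ]
      ring
  | succ k ih =>
      have expand : ∀ (N : ℕ) (q : ℝ), auxFk N q (k+1) = auxFk N q k + binomPMF N q (k+1) :=
        fun N q => Finset.sum_range_succ _ _
      rw [expand (n+1) p, expand n p, ih, auxPascal]
      ring

lemma auxMonoDeriv (a b : ℕ) (t : ℝ) :
    HasDerivAt (fun s : ℝ => s^a * (1-s)^b)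
      ((a:ℝ) * t^(a-1) * (1-t)^b - (b:ℝ) * t^a * (1-t)^(b-1)) t := by
  have h1 : HasDerivAt (fun s : ℝ => 1 - s) (-1) t := by
    simpa using (hasDerivAt_id t).const_sub 1
  have h2 : HasDerivAt (fun s : ℝ => (1-s)^b) (-((b:ℝ) * (1-t)^(b-1))) t := by
    have := (hasDerivAt_pow b (1-t)).comp t h1
    refine this.congr_deriv ?_
    ring
  have := (hasDerivAt_pow a t).mul h2
  refine this.congr_deriv ?_
  ring

lemma auxChooseIdB (n k : ℕ) (hk : k ≤ n) :
    (n - k) * ((n+1).choose (k+1)) = (n+1) * (n.choose (k+1)) := by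
  apply Nat.eq_of_mul_eq_mul_left (show 0 < k + 1 by omega)
  calc (k+1) * ((n - k) * ((n+1).choose (k+1)))
      = (n - k) * ((k+1) * ((n+1).choose (k+1))) := by ring
    _ = (n - k) * ((n+1) * (n.choose k)) := by
        rw [show (k+1) * ((n+1).choose (k+1)) = (n+1) * n.choose k from by
          rw [mul_comm]
          exact (Nat.add_one_mul_choose_eq n k).symm]
    _ = (n+1) * (n.choose k * (n - k)) := by ring
    _ = (n+1) * (n.choose (k+1) * (k+1)) := by rw [Nat.choose_succ_right_eq]
    _ = (k+1) * ((n+1) * (n.choose (k+1))) := by ring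

lemma auxDeriv (n k : ℕ) (hk : k ≤ n) (t : ℝ) :
    HasDerivAt (fun s => auxFk (n+1) s k)
      (-(((n:ℝ)+1) * (n.choose k : ℝ) * (t^k * (1-t)^(n-k)))) t := by
  induction k with
  | zero =>
      have h : (fun s : ℝ => auxFk (n+1) s 0) = fun s => (1-s)^(n+1) := by
        funext s; simp [auxFk, binomPMF]
      rw [h]
      have h1 : HasDerivAt (fun s : ℝ => 1 - s) (-1) t := by
        simpa using (hasDerivAt_id t).const_sub 1
      have := (hasDerivAt_pow (n+1) (1-t)).comp t h1
      refine this.congr_deriv ?_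
      push_cast [Nat.choose_zero_right, Nat.sub_zero]
      ring
  | succ k ih =>
      have hkn : k ≤ n := Nat.le_of_succ_le hk
      have h : (fun s : ℝ => auxFk (n+1) s (k+1))
          = fun s => auxFk (n+1) s k + ((n+1).choose (k+1) : ℝ) * (s^(k+1) * (1-s)^(n-k)) := by
        funext s
        rw [auxFk, Finset.sum_range_succ, ← auxFk]
        congr 1
        unfold binomPMF
        rw [show n + 1 - (k+1) = n - k from by omega]
        ring
      rw [h]
      have hd := (ih hkn).add (((auxMonoDeriv (k+1) (n-k) t)).const_mul (((n+1).choose (k+1) : ℝ)))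
      refine hd.congr_deriv ?_
      have idA : ((k:ℝ)+1) * ((n+1).choose (k+1) : ℝ) = ((n:ℝ)+1) * (n.choose k : ℝ) := by
        have h0 : (n+1) * n.choose k = (n+1).choose (k+1) * (k+1) := Nat.add_one_mul_choose_eq n k
        have h0' : ((n:ℝ)+1) * (n.choose k : ℝ) = ((n+1).choose (k+1) : ℝ) * ((k:ℝ)+1) := by
          exact_mod_cast h0
        linarith
      have idB : (((n - k : ℕ)):ℝ) * ((n+1).choose (k+1) : ℝ)
          = ((n:ℝ)+1) * (n.choose (k+1) : ℝ) := by
        exact_mod_cast auxChooseIdB n k hkn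
      have e1 : n - k = (n - (k+1)) + 1 := by omega
      have e2 : (k+1) - 1 = k := by omega
      have e3 : (n - k) - 1 = n - (k+1) := by omega
      rw [e1] at idB
      rw [e2, e3, e1]
      push_cast at idB ⊢
      linear_combination (t^k * (1-t)^(n-(k+1)) * (1-t)) * idA
        - (t^(k+1) * (1-t)^(n-(k+1))) * idB


lemma auxAnti (j k : ℕ) (a b : ℝ) (hk1 : k + 1 ≤ j) (ha0 : 0 < a) (hb1 : b ≤ 1)
    (hka : (k:ℝ) ≤ (j:ℝ) * a) :
    StrictAntiOn (fun t : ℝ => t^k * (1-t)^(j-k)) (Set.Icc a b) := by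
  apply strictAntiOn_of_deriv_neg (convex_Icc a b)
  · exact Continuous.continuousOn (by continuity)
  · intro t ht
    rw [interior_Icc] at ht
    have ht0 : 0 < t := lt_trans ha0 ht.1
    have ht1 : t < 1 := lt_of_lt_of_le ht.2 hb1
    have hjt : (k:ℝ) < (j:ℝ) * t := by
      have hj0 : (0:ℝ) < (j:ℝ) := by
        have : 0 < j := by omega
        exact_mod_cast this
      have : (j:ℝ) * a < (j:ℝ) * t := by
        exact (mul_lt_mul_iff_right₀ hj0).mpr ht.1
      linarith
    rw [(auxMonoDeriv k (j-k) t).deriv]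
    have hkj : k ≤ j := by omega
    have hcast : ((j - k : ℕ):ℝ) = (j:ℝ) - (k:ℝ) := Nat.cast_sub hkj
    have h3 : (k:ℝ) - (j:ℝ) * t < 0 := by linarith
    rcases Nat.eq_zero_or_pos k with hk0 | hk0
    · subst hk0
      have hpow : 0 < (1-t)^(j-0-1) := pow_pos (by linarith) _
      have hj0 : (0:ℝ) < (j:ℝ) := by
        have : 0 < j := by omega
        exact_mod_cast this
      simp only [Nat.cast_zero, zero_mul, pow_zero, mul_one, Nat.sub_zero, zero_sub]
      rw [Nat.sub_zero] at hpow
      nlinarith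
    · have ek : t^k = t^(k-1) * t := by
        rw [← pow_succ]
        congr 1
        omega
      have ej : (1-t)^(j-k) = (1-t)^(j-k-1) * (1-t) := by
        rw [← pow_succ]
        congr 1
        omega
      have h1 : 0 < t^(k-1) := pow_pos ht0 _
      have h2 : 0 < (1-t)^(j-k-1) := pow_pos (by linarith) _
      calc (k:ℝ) * t^(k-1) * (1-t)^(j-k) - ((j-k:ℕ):ℝ) * t^k * (1-t)^(j-k-1)
          = (t^(k-1) * (1-t)^(j-k-1)) * ((k:ℝ) - (j:ℝ)*t) := by
            rw [ek, ej, hcast]; ring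
        _ < 0 := mul_neg_of_pos_of_neg (mul_pos h1 h2) h3

lemma auxStep (j k : ℕ) (lam : ℝ) (hl0 : 0 < lam) (hlj : lam ≤ j) (hk : (k:ℝ) ≤ lam - 1) :
    auxFk j (lam/(j:ℝ)) k < auxFk (j+1) (lam/((j+1:ℕ):ℝ)) k := by
  have hj0 : 0 < j := by
    by_contra h
    push_neg at h
    have hj : j = 0 := by omega
    subst hj
    simp at hlj
    linarith
  have hj0R : (0:ℝ) < j := by exact_mod_cast hj0
  have hcast1 : ((j+1:ℕ):ℝ) = (j:ℝ)+1 := by push_cast; ring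
  have hj1R : (0:ℝ) < ((j+1:ℕ):ℝ) := by rw [hcast1]; linarith
  set q := lam / (j:ℝ) with hqdef
  set q' := lam / ((j+1:ℕ):ℝ) with hq'def
  have hq'q : q' < q := by
    apply div_lt_div_of_pos_left hl0 hj0R
    rw [hcast1]; linarith
  have hql : q ≤ 1 := by rw [hqdef, div_le_one hj0R]; exact hlj
  have hq'0 : 0 < q' := div_pos hl0 hj1R
  have hkj : (k:ℝ) < (j:ℝ) := by linarith
  have hkjN : k < j := by exact_mod_cast hkj
  have hkq' : (k:ℝ) ≤ (j:ℝ) * q' := by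
    have h2 : (k:ℝ) * ((j:ℝ)+1) ≤ (j:ℝ)*lam := by nlinarith
    rw [hq'def, hcast1, mul_div_assoc']
    rw [le_div_iff₀ (by linarith)]
    linarith
  have hcont : ContinuousOn (fun s => auxFk (j+1) s k) (Set.Icc q' q) :=
    fun s _ => ((auxDeriv j k hkjN.le s).continuousAt).continuousWithinAt
  obtain ⟨ξ, hξ, hslope⟩ := exists_hasDerivAt_eq_slope (fun s => auxFk (j+1) s k)
    (fun s => -(((j:ℝ)+1) * (j.choose k : ℝ) * (s^k * (1-s)^(j-k)))) hq'q hcont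
    (fun s _ => auxDeriv j k hkjN.le s)
  set g := fun t : ℝ => t^k * (1-t)^(j-k) with hg
  have hanti : StrictAntiOn g (Set.Icc q' q) := auxAnti j k q' q (by omega) hq'0 hql hkq'
  have hξmem : ξ ∈ Set.Icc q' q := ⟨hξ.1.le, hξ.2.le⟩
  have hqmem : q ∈ Set.Icc q' q := ⟨hq'q.le, le_refl q⟩
  have hgt : g q < g ξ := hanti hξmem hqmem hξ.2
  set C := (j.choose k : ℝ) with hC
  have hCpos : (0:ℝ) < C := by
    rw [hC]
    exact_mod_cast Nat.choose_pos hkjN.le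
  have hqq' : (0:ℝ) < q - q' := sub_pos.mpr hq'q
  rw [eq_div_iff hqq'.ne'] at hslope
  -- hslope : -( (j+1) * C * g ξ ) * (q - q') = auxFk (j+1) q k - auxFk (j+1) q' k
  have hfact : (q - q') * ((j:ℝ)+1) = q := by
    rw [hqdef, hq'def, hcast1]
    field_simp
    ring
  have hrec := auxFk_succ j k q
  have hpmf : binomPMF j q k = C * (q^k * (1-q)^(j-k)) := by
    rw [hC]
    unfold binomPMF
    ring
  have h5 : (q - q') * (((j:ℝ)+1) * (C * (ξ^k * (1-ξ)^(j-k)))) = q * (C * (ξ^k * (1-ξ)^(j-k))) := by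
    linear_combination (C * (ξ^k * (1-ξ)^(j-k))) * hfact
  have hqpos : 0 < q := div_pos hl0 hj0R
  have hgt' : q^k * (1-q)^(j-k) < ξ^k * (1-ξ)^(j-k) := hgt
  have hA : auxFk (j+1) q' k
      = auxFk (j+1) q k + (q - q') * (((j:ℝ)+1) * (C * (ξ^k * (1-ξ)^(j-k)))) := by
    linear_combination hslope
  have hB : auxFk (j+1) q k = auxFk j q k - q * (C * (q^k * (1-q)^(j-k))) := by
    rw [hrec, hpmf]
  have h6 : 0 < q * (C * ((ξ^k * (1-ξ)^(j-k)) - (q^k * (1-q)^(j-k)))) :=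
    mul_pos hqpos (mul_pos hCpos (sub_pos.mpr hgt'))
  have h7 : auxFk (j+1) q' k - auxFk j q k
      = q * (C * (ξ^k * (1-ξ)^(j-k))) - q * (C * (q^k * (1-q)^(j-k))) := by
    linear_combination hA + hB + h5
  nlinarith [h6, h7]

lemma auxChain (m k : ℕ) (lam : ℝ) (hl0 : 0 < lam) (hlm : lam ≤ m) (hk : (k:ℝ) ≤ lam - 1) :
    ∀ d : ℕ, auxFk m (lam/(m:ℝ)) k < auxFk (m+d+1) (lam/((m+d+1:ℕ):ℝ)) k := by
  intro d
  induction d with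
  | zero => exact auxStep m k lam hl0 hlm hk
  | succ d ih =>
      have hlm2 : lam ≤ ((m+d+1:ℕ):ℝ) := by
        push_cast
        have : (0:ℝ) ≤ (d:ℝ) := Nat.cast_nonneg d
        linarith
      have hstep := auxStep (m+d+1) k lam hl0 hlm2 hk
      have e : m+(d+1)+1 = (m+d+1)+1 := by omega
      rw [e]
      exact lt_trans ih hstep

lemma auxCDF_eq (n : ℕ) (p x : ℝ) (hx : 0 ≤ x) (hn : ⌊x⌋₊ < n) :
    binomCDF n p x = auxFk n p ⌊x⌋₊ := by
  unfold binomCDF auxFk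
  set K := ⌊x⌋₊ with hK
  have h1 : ∀ i ∈ range (n+1),
      (if (i:ℝ) ≤ x then binomPMF n p i else 0) = if i ≤ K then binomPMF n p i else 0 := by
    intro i _
    by_cases h : i ≤ K
    · rw [if_pos ((Nat.le_floor_iff hx).mp h), if_pos h]
    · rw [if_neg (fun hc => h ((Nat.le_floor_iff hx).mpr hc)), if_neg h]
  rw [Finset.sum_congr rfl h1, ← Finset.sum_filter]
  congr 1
  ext i
  simp only [Finset.mem_filter, Finset.mem_range, Nat.lt_succ_iff]
  omega

theorem binomCDF_gt_of_concentrated_below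
    (n m : ℕ) (hn : 0 < n) (hm : 0 < m) (a : ℝ) (ha : 1 < a)
    (hna : (n : ℝ) = a * m)
    (p : ℝ) (hp : 0 < p) (hap : a * p ≤ 1) :
    ∀ x : ℝ, 0 ≤ x → x ≤ (n : ℝ) * p - 1 → binomCDF n p x > binomCDF m (a * p) x := by
  intro x hx0 hx1
  set lam := (n:ℝ) * p with hlam
  have hm0 : (0:ℝ) < m := by exact_mod_cast hm
  have hn0 : (0:ℝ) < n := by exact_mod_cast hn
  have hlam0 : 0 < lam := mul_pos hn0 hp
  have hq : a * p = lam / (m:ℝ) := by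
    rw [hlam, hna]
    field_simp
  have hpl : p = lam / (n:ℝ) := by
    rw [hlam]
    field_simp
  have hlm : lam ≤ (m:ℝ) := by
    rw [hlam, hna]
    nlinarith
  have hmnR : (m:ℝ) < (n:ℝ) := by
    rw [hna]
    nlinarith
  have hmn : m < n := by exact_mod_cast hmnR
  set K := ⌊x⌋₊ with hK
  have hKx : (K:ℝ) ≤ x := Nat.floor_le hx0
  have hKlam : (K:ℝ) ≤ lam - 1 := le_trans hKx hx1
  have hKm : K < m := by
    have : (K:ℝ) < (m:ℝ) := by linarith
    exact_mod_cast this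
  have hKn : K < n := lt_trans hKm hmn
  rw [auxCDF_eq n p x hx0 hKn, auxCDF_eq m (a*p) x hx0 hKm, hq, hpl]
  have hd : n = m + (n - m - 1) + 1 := by omega
  have hchain := auxChain m K lam hlam0 hlm hKlam (n - m - 1)
  rw [← hd] at hchain
  exact hchain
end

section
/- Let n be a positive integer and a ≥ 1 be such that n/a is a positive integer, and let p > 0 satisfy a·p ≤ 1. Then for every u with 1/2 + sqrt(1/(2·e·n·p·(1−p))) ≤ u ≤ 1, F_{n,p}^{-1}(u) ≥ F_{n/a, a·p}^{-1}(u). -/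
namespace BinomAux

open Finset Real Set

/-- Partial sum of the binomial pmf up to `j`. -/
noncomputable def SB (n : ℕ) (p : ℝ) (j : ℕ) : ℝ :=
  ∑ k ∈ Finset.range (j + 1), binomPMF n p k



lemma pmf_nonneg {n : ℕ} {p : ℝ} (hp0 : 0 ≤ p) (hp1 : p ≤ 1) (k : ℕ) :
    0 ≤ binomPMF n p k := by
  unfold binomPMF
  have : (0:ℝ) ≤ 1 - p := by linarith
  positivity

lemma pmf_zero_of_gt {n k : ℕ} (h : n < k) (p : ℝ) : binomPMF n p k = 0 := by
  unfold binomPMF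
  rw [Nat.choose_eq_zero_of_lt h]
  simp

lemma SB_mono_j {n : ℕ} {p : ℝ} (hp0 : 0 ≤ p) (hp1 : p ≤ 1) :
    Monotone (SB n p) := by
  intro i j hij
  unfold SB
  exact Finset.sum_le_sum_of_subset_of_nonneg
    (Finset.range_subset_range.2 (by omega)) (fun k _ _ => pmf_nonneg hp0 hp1 k)

lemma SB_stab {n : ℕ} (p : ℝ) {j : ℕ} (h : n ≤ j) : SB n p j = SB n p n := by
  unfold SB
  rw [← Finset.sum_subset (Finset.range_subset_range.2 (by omega : n + 1 ≤ j + 1))]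
  intro k hk hk'
  simp only [Finset.mem_range] at hk hk'
  exact pmf_zero_of_gt (by omega) p

lemma SB_self_eq_one {n : ℕ} {p : ℝ} : SB n p n = 1 := by
  unfold SB binomPMF
  have h2 : ∑ k ∈ Finset.range (n+1), (n.choose k:ℝ)*p^k*(1-p)^(n-k) = (p+(1-p))^n := by
    rw [add_pow p (1 - p) n]
    exact Finset.sum_congr rfl fun k _ => by ring
  rw [h2]
  norm_num

lemma SB_eq_one {n : ℕ} {p : ℝ} {j : ℕ} (h : n ≤ j) : SB n p j = 1 := by
  rw [SB_stab p h]; exact SB_self_eq_one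

lemma SB_le_one {n : ℕ} {p : ℝ} (hp0 : 0 ≤ p) (hp1 : p ≤ 1) (j : ℕ) :
    SB n p j ≤ 1 := by
  calc SB n p j ≤ SB n p (max j n) := SB_mono_j hp0 hp1 (le_max_left _ _)
  _ = 1 := SB_eq_one (le_max_right _ _)

lemma SB_nonneg {n : ℕ} {p : ℝ} (hp0 : 0 ≤ p) (hp1 : p ≤ 1) (j : ℕ) :
    0 ≤ SB n p j :=
  Finset.sum_nonneg (fun k _ => pmf_nonneg hp0 hp1 k)

lemma cdf_nat (n : ℕ) (p : ℝ) (j : ℕ) :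
    binomCDF n p (j : ℝ) = SB n p (min j n) := by
  unfold binomCDF SB
  rw [← Finset.sum_subset (Finset.range_subset_range.2 (by omega : min j n + 1 ≤ n + 1))]
  · apply Finset.sum_congr rfl
    intro k hk
    simp only [Finset.mem_range] at hk
    rw [if_pos]
    exact_mod_cast (by omega : k ≤ j)
  · intro k hk hk'
    simp only [Finset.mem_range] at hk hk'
    rw [if_neg]
    exact_mod_cast (by omega : ¬ (k ≤ j))

lemma cdf_floor (n : ℕ) (p : ℝ) {x : ℝ} (hx : 0 ≤ x) :
    binomCDF n p x = SB n p (min ⌊x⌋₊ n) := by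
  rw [← cdf_nat]
  unfold binomCDF
  apply Finset.sum_congr rfl
  intro k _
  congr 1
  simp only [eq_iff_iff]
  exact ⟨fun h => Nat.cast_le.2 (Nat.le_floor h), fun h => (Nat.le_floor_iff hx).1 (Nat.cast_le.1 h)⟩

lemma cdf_neg (n : ℕ) (p : ℝ) {x : ℝ} (hx : x < 0) : binomCDF n p x = 0 := by
  unfold binomCDF
  apply Finset.sum_eq_zero
  intro k _
  rw [if_neg]
  push_neg
  calc x < 0 := hx
  _ ≤ k := Nat.cast_nonneg k


lemma pmf_pascal {n k : ℕ} (h : k ≤ n) (p : ℝ) :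
    binomPMF (n+1) p (k+1) = (1-p) * binomPMF n p (k+1) + p * binomPMF n p k := by
  unfold binomPMF
  rcases Nat.lt_or_ge k n with hlt | hge
  · have e0 : n + 1 - (k+1) = (n - (k+1)) + 1 := by omega
    have e2 : n - k = (n - (k+1)) + 1 := by omega
    rw [Nat.choose_succ_succ (n := n) (k := k), e0, e2]
    push_cast
    ring
  · have hkn : k = n := by omega
    subst hkn
    simp only [Nat.choose_self, Nat.choose_succ_self, Nat.sub_self, Nat.cast_zero,
      Nat.cast_one, pow_zero, Nat.add_sub_cancel]
    ring

lemma SB_pascal {n : ℕ} (p : ℝ) : ∀ {j : ℕ}, j ≤ n →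
    SB (n+1) p j = SB n p j - p * binomPMF n p j := by
  intro j
  induction j with
  | zero =>
    intro _
    unfold SB
    rw [Finset.sum_range_one, Finset.sum_range_one]
    unfold binomPMF
    simp only [Nat.choose_zero_right, Nat.cast_one, pow_zero, Nat.sub_zero]
    ring
  | succ j ih =>
    intro hj
    have hj' : j ≤ n := by omega
    show SB (n+1) p (j+1) = _
    unfold SB
    rw [Finset.sum_range_succ, Finset.sum_range_succ (f := fun k => binomPMF n p k)]
    have ihh := ih hj'
    unfold SB at ihh
    rw [ihh, pmf_pascal hj' p]
    ring

lemma hasDerivAt_core (i M : ℕ) (s : ℝ) :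
    HasDerivAt (fun t : ℝ => t^i * (1-t)^M)
      ((i:ℝ) * s^(i-1) * (1-s)^M - (M:ℝ) * s^i * (1-s)^(M-1)) s := by
  have h1 : HasDerivAt (fun t : ℝ => t^i) ((i:ℝ) * s^(i-1)) s := hasDerivAt_pow i s
  have h0 : HasDerivAt (fun t : ℝ => 1 - t) (-1) s := (hasDerivAt_id s).const_sub 1
  have h2 : HasDerivAt (fun t : ℝ => (1-t)^M) ((M:ℝ) * (1-s)^(M-1) * (-1)) s :=
    (hasDerivAt_pow M (1-s)).comp s h0
  have h3 := h1.mul h2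
  refine h3.congr_deriv (Eq.symm ?_)
  ring

lemma hasDerivAt_SB {n : ℕ} : ∀ {j : ℕ}, j ≤ n → ∀ s : ℝ,
    HasDerivAt (fun t => SB (n+1) t j) (-((n:ℝ)+1) * binomPMF n s j) s := by
  intro j
  induction j with
  | zero =>
    intro _ s
    have hfun : (fun t : ℝ => SB (n+1) t 0)
        = fun t : ℝ => (((n+1).choose 0 : ℕ) : ℝ) * (t^0 * (1-t)^(n+1)) := by
      funext t
      unfold SB binomPMF
      rw [Finset.sum_range_one]
      norm_num
    rw [hfun]
    have := (hasDerivAt_core 0 (n+1) s).const_mul ((((n+1).choose 0 : ℕ)) : ℝ)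
    refine this.congr_deriv (Eq.symm ?_)
    unfold binomPMF
    simp only [Nat.choose_zero_right, Nat.cast_one, pow_zero, Nat.sub_zero]
    push_cast
    ring
  | succ j ih =>
    intro hj s
    have hj' : j ≤ n := by omega
    have hfun : (fun t : ℝ => SB (n+1) t (j+1))
        = fun t : ℝ => SB (n+1) t j
            + (((n+1).choose (j+1) : ℕ) : ℝ) * (t^(j+1) * (1-t)^(n-j)) := by
      funext t
      unfold SB binomPMF
      rw [Finset.sum_range_succ]
      have : n + 1 - (j+1) = n - j := by omega
      rw [this]
      ring
    rw [hfun]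
    have hd := (ih hj' s).add
      ((hasDerivAt_core (j+1) (n-j) s).const_mul ((((n+1).choose (j+1) : ℕ)) : ℝ))
    refine hd.congr_deriv (Eq.symm ?_)
    have g1 : (n+1) * n.choose j = (n+1).choose (j+1) * (j+1) := by
      simpa [Nat.succ_eq_add_one] using Nat.add_one_mul_choose_eq n j
    have f1 := congrArg (fun x : ℕ => (x:ℝ)) g1
    push_cast at f1
    have g2 : (n+1).choose (j+1) * (n - j) = (n+1) * n.choose (j+1) := by
      have h1 := Nat.choose_succ_right_eq (n+1) (j+1)
      have h2 := Nat.add_one_mul_choose_eq n (j+1)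
      have e : n + 1 - (j+1) = n - j := by omega
      rw [e] at h1
      rw [h2, h1]
    have f2 := congrArg (fun x : ℕ => (x:ℝ)) g2
    push_cast [Nat.cast_sub hj'] at f2
    simp only [Nat.add_sub_cancel]
    unfold binomPMF
    have e4 : n - (j+1) = n - j - 1 := by omega
    rw [e4]
    push_cast [Nat.cast_sub hj']
    linear_combination (s^j * (1-s)^(n-j)) * f1 + (s^(j+1) * (1-s)^(n-j-1)) * f2

lemma core_cont (i M : ℕ) : Continuous (fun s : ℝ => s^i * (1-s)^M) := by fun_prop

lemma core_monoOn (i M : ℕ) :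
    MonotoneOn (fun s : ℝ => s^i * (1-s)^M) (Set.Icc 0 ((i:ℝ)/((i:ℝ)+(M:ℝ)))) := by
  apply monotoneOn_of_deriv_nonneg (convex_Icc _ _) (core_cont i M).continuousOn
  · intro x _
    exact (hasDerivAt_core i M x).differentiableAt.differentiableWithinAt
  · intro x hx
    rw [interior_Icc, Set.mem_Ioo] at hx
    rw [(hasDerivAt_core i M x).deriv]
    obtain ⟨hx0, hxc⟩ := hx
    have hc0 : (0:ℝ) < (i:ℝ)/((i:ℝ)+(M:ℝ)) := lt_trans hx0 hxc
    have hi : i ≠ 0 := by rintro rfl; simp at hc0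
    obtain ⟨i', rfl⟩ : ∃ i', i = i' + 1 := ⟨i - 1, by omega⟩
    have hiM : (0:ℝ) < (↑(i'+1):ℝ) + (M:ℝ) := by positivity
    have hxiM : x * ((↑(i'+1):ℝ) + M) < ↑(i'+1) := (lt_div_iff₀ hiM).1 hxc
    have hx1 : x < 1 := by
      apply lt_of_lt_of_le hxc
      apply div_le_one_of_le₀ _ hiM.le
      have : (0:ℝ) ≤ (M:ℝ) := Nat.cast_nonneg M
      linarith
    rcases Nat.eq_zero_or_pos M with hM | hM
    · subst hM
      simp only [Nat.cast_zero, zero_mul, sub_zero, pow_zero, mul_one]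
      positivity
    · obtain ⟨M', rfl⟩ : ∃ M', M = M' + 1 := ⟨M - 1, by omega⟩
      have key : (↑(i'+1):ℝ) * x^(i'+1-1) * (1-x)^(M'+1) - (↑(M'+1):ℝ) * x^(i'+1) * (1-x)^(M'+1-1)
          = x^i' * (1-x)^M' * ((↑(i'+1):ℝ) - ((↑(i'+1):ℝ) + (↑(M'+1):ℝ)) * x) := by
        simp only [Nat.add_sub_cancel]
        push_cast
        ring
      rw [key]
      apply mul_nonneg (mul_nonneg (pow_nonneg hx0.le i') (pow_nonneg (by linarith) M'))
      push_cast at hxiM ⊢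
      linarith

lemma core_antiOn (i M : ℕ) :
    AntitoneOn (fun s : ℝ => s^i * (1-s)^M) (Set.Icc ((i:ℝ)/((i:ℝ)+(M:ℝ))) 1) := by
  apply antitoneOn_of_deriv_nonpos (convex_Icc _ _) (core_cont i M).continuousOn
  · intro x _
    exact (hasDerivAt_core i M x).differentiableAt.differentiableWithinAt
  · intro x hx
    rw [interior_Icc, Set.mem_Ioo] at hx
    rw [(hasDerivAt_core i M x).deriv]
    obtain ⟨hxc, hx1⟩ := hx
    have hx0 : 0 ≤ x := by
      apply le_trans _ hxc.le
      positivity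
    rcases Nat.eq_zero_or_pos i with hi | hi
    · subst hi
      simp only [Nat.cast_zero, zero_mul, zero_sub, pow_zero, mul_one, neg_nonpos]
      have : (0:ℝ) ≤ (1-x) := by linarith
      positivity
    · obtain ⟨i', rfl⟩ : ∃ i', i = i' + 1 := ⟨i - 1, by omega⟩
      rcases Nat.eq_zero_or_pos M with hM | hM
      · exfalso
        subst hM
        rw [Nat.cast_zero, add_zero, div_self (by positivity)] at hxc
        linarith
      · obtain ⟨M', rfl⟩ : ∃ M', M = M' + 1 := ⟨M - 1, by omega⟩
        have hiM : (0:ℝ) < (↑(i'+1):ℝ) + (↑(M'+1):ℝ) := by positivity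
        have hxiM : (↑(i'+1):ℝ) < x * ((↑(i'+1):ℝ) + (↑(M'+1):ℝ)) := (div_lt_iff₀ hiM).1 hxc
        have key : (↑(i'+1):ℝ) * x^(i'+1-1) * (1-x)^(M'+1) - (↑(M'+1):ℝ) * x^(i'+1) * (1-x)^(M'+1-1)
            = x^i' * (1-x)^M' * ((↑(i'+1):ℝ) - ((↑(i'+1):ℝ) + (↑(M'+1):ℝ)) * x) := by
          simp only [Nat.add_sub_cancel]
          push_cast
          ring
        rw [key]
        apply mul_nonpos_of_nonneg_of_nonpos
        · have : (0:ℝ) ≤ 1 - x := by linarith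
          positivity
        · push_cast at hxiM ⊢
          linarith

lemma pmf_eq_core (N j : ℕ) (t : ℝ) :
    binomPMF N t j = (N.choose j : ℝ) * (t^j * (1-t)^(N-j)) := by
  unfold binomPMF; ring

lemma pmf_mono_p {N j : ℕ} (hjN : j ≤ N) {s r : ℝ} (hs0 : 0 ≤ s) (hsr : s ≤ r)
    (hr : r ≤ (j:ℝ)/(N:ℝ)) (hN : 0 < N) : binomPMF N s j ≤ binomPMF N r j := by
  have hcast : (j:ℝ)/((j:ℝ)+((N-j:ℕ):ℝ)) = (j:ℝ)/(N:ℝ) := by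
    congr 1
    push_cast [Nat.cast_sub hjN]
    ring
  rw [pmf_eq_core, pmf_eq_core]
  apply mul_le_mul_of_nonneg_left _ (Nat.cast_nonneg _)
  have h1 : s ∈ Set.Icc (0:ℝ) ((j:ℝ)/((j:ℝ)+((N-j:ℕ):ℝ))) := by
    rw [hcast]; exact ⟨hs0, le_trans hsr hr⟩
  have h2 : r ∈ Set.Icc (0:ℝ) ((j:ℝ)/((j:ℝ)+((N-j:ℕ):ℝ))) := by
    rw [hcast]; exact ⟨le_trans hs0 hsr, hr⟩
  exact core_monoOn j (N-j) h1 h2 hsr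

lemma pmf_anti_p {N j : ℕ} (hjN : j ≤ N) {s r : ℝ} (hs : (j:ℝ)/(N:ℝ) ≤ s) (hsr : s ≤ r)
    (hr : r ≤ 1) (hN : 0 < N) : binomPMF N r j ≤ binomPMF N s j := by
  have hcast : (j:ℝ)/((j:ℝ)+((N-j:ℕ):ℝ)) = (j:ℝ)/(N:ℝ) := by
    congr 1
    push_cast [Nat.cast_sub hjN]
    ring
  rw [pmf_eq_core, pmf_eq_core]
  apply mul_le_mul_of_nonneg_left _ (Nat.cast_nonneg _)
  have h1 : s ∈ Set.Icc ((j:ℝ)/((j:ℝ)+((N-j:ℕ):ℝ))) 1 := by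
    rw [hcast]; exact ⟨hs, le_trans hsr hr⟩
  have h2 : r ∈ Set.Icc ((j:ℝ)/((j:ℝ)+((N-j:ℕ):ℝ))) 1 := by
    rw [hcast]; exact ⟨le_trans hs hsr, hr⟩
  exact core_antiOn j (N-j) h1 h2 hsr

section Steps

variable {N j : ℕ} {μ : ℝ}

/-- derivative of the shifted function φ -/
lemma hasDerivAt_phi (hjN : j ≤ N) (c : ℝ) (s : ℝ) :
    HasDerivAt (fun t => SB (N+1) t j + c * t)
      (-((N:ℝ)+1) * binomPMF N s j + c) s := by
  have h2 : HasDerivAt (fun t : ℝ => c * t) c s := by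
    simpa using (hasDerivAt_id s).const_mul c
  exact (hasDerivAt_SB hjN s).add h2

lemma stepA (hμ0 : 0 < μ) (hμN : μ ≤ N) (hμj : μ ≤ (j:ℝ)) (hjN : j ≤ N) :
    SB (N+1) (μ/((N:ℝ)+1)) j ≤ SB N (μ/(N:ℝ)) j := by
  have hN0 : (0:ℝ) < N := lt_of_lt_of_le hμ0 hμN
  have hNnat : 0 < N := by exact_mod_cast hN0
  set r : ℝ := μ/(N:ℝ) with hr
  set r' : ℝ := μ/((N:ℝ)+1) with hr'
  have hr'0 : 0 < r' := by positivity
  have hr'r : r' < r := by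
    apply div_lt_div_of_pos_left hμ0 hN0
    linarith
  have hrj : r ≤ (j:ℝ)/(N:ℝ) := by
    rw [hr]
    gcongr
  set c : ℝ := ((N:ℝ)+1) * binomPMF N r j with hc
  have hmono : MonotoneOn (fun t => SB (N+1) t j + c * t) (Set.Icc r' r) := by
    apply monotoneOn_of_deriv_nonneg (convex_Icc _ _)
    · intro x _
      exact (hasDerivAt_phi hjN c x).continuousAt.continuousWithinAt
    · intro x _
      exact (hasDerivAt_phi hjN c x).differentiableAt.differentiableWithinAt
    · intro x hx
      rw [interior_Icc, Set.mem_Ioo] at hx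
      rw [(hasDerivAt_phi hjN c x).deriv]
      have hle : binomPMF N x j ≤ binomPMF N r j :=
        pmf_mono_p hjN (by linarith [hx.1]) hx.2.le hrj hNnat
      rw [hc]
      nlinarith [hle]
  have h := hmono (Set.left_mem_Icc.2 hr'r.le) (Set.right_mem_Icc.2 hr'r.le) hr'r.le
  dsimp only at h
  have key : c * (r - r') = r * binomPMF N r j := by
    rw [hc, hr, hr']
    field_simp
    ring
  have pascal := SB_pascal (n := N) r hjN
  linarith

lemma stepB (hμ0 : 0 < μ) (hμN : μ ≤ N) (hjμ : (j:ℝ) ≤ μ - 1) :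
    SB N (μ/(N:ℝ)) j ≤ SB (N+1) (μ/((N:ℝ)+1)) j := by
  have hN0 : (0:ℝ) < N := lt_of_lt_of_le hμ0 hμN
  have hNnat : 0 < N := by exact_mod_cast hN0
  have hjN : j ≤ N := by
    have hh : (j:ℝ) ≤ (N:ℝ) := by linarith
    exact_mod_cast hh
  set r : ℝ := μ/(N:ℝ) with hr
  set r' : ℝ := μ/((N:ℝ)+1) with hr'
  have hr'0 : 0 < r' := by positivity
  have hr'r : r' < r := by
    apply div_lt_div_of_pos_left hμ0 hN0
    linarith
  have hr1 : r ≤ 1 := by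
    rw [hr, div_le_one hN0]
    exact hμN
  have hjr' : (j:ℝ)/(N:ℝ) ≤ r' := by
    rw [hr', div_le_div_iff₀ hN0 (by linarith)]
    have : (j:ℝ) * ((N:ℝ)+1) = (j:ℝ)*(N:ℝ) + (j:ℝ) := by ring
    nlinarith [hjμ, hμN, hμ0]
  set c : ℝ := ((N:ℝ)+1) * binomPMF N r j with hc
  have hanti : AntitoneOn (fun t => SB (N+1) t j + c * t) (Set.Icc r' r) := by
    apply antitoneOn_of_deriv_nonpos (convex_Icc _ _)
    · intro x _
      exact (hasDerivAt_phi hjN c x).continuousAt.continuousWithinAt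
    · intro x _
      exact (hasDerivAt_phi hjN c x).differentiableAt.differentiableWithinAt
    · intro x hx
      rw [interior_Icc, Set.mem_Ioo] at hx
      rw [(hasDerivAt_phi hjN c x).deriv]
      have hle : binomPMF N r j ≤ binomPMF N x j :=
        pmf_anti_p hjN (le_trans hjr' hx.1.le) hx.2.le hr1 hNnat
      rw [hc]
      nlinarith [hle]
  have h := hanti (Set.left_mem_Icc.2 hr'r.le) (Set.right_mem_Icc.2 hr'r.le) hr'r.le
  dsimp only at h
  have key : c * (r - r') = r * binomPMF N r j := by
    rw [hc, hr, hr']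
    field_simp
    ring
  have pascal := SB_pascal (n := N) r hjN
  linarith

lemma stepA' (hμ0 : 0 < μ) (hμN : μ ≤ N) (hμj : μ ≤ (j:ℝ)) :
    SB (N+1) (μ/((N:ℝ)+1)) j ≤ SB N (μ/(N:ℝ)) j := by
  rcases le_or_gt j N with h | h
  · exact stepA hμ0 hμN hμj h
  · have hN0 : (0:ℝ) < N := lt_of_lt_of_le hμ0 hμN
    rw [SB_eq_one (by omega : N ≤ j)]
    apply SB_le_one
    · positivity
    · rw [div_le_one (by linarith)]
      linarith

lemma chainA (hμ0 : 0 < μ) {K M : ℕ} (hμK : μ ≤ K) (hKM : K ≤ M) (hμj : μ ≤ (j:ℝ)) :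
    SB M (μ/(M:ℝ)) j ≤ SB K (μ/(K:ℝ)) j := by
  induction M, hKM using Nat.le_induction with
  | base => exact le_refl _
  | succ M hKM ih =>
    have hM : μ ≤ (M:ℝ) := le_trans hμK (by exact_mod_cast hKM)
    have hcast : (((M+1):ℕ):ℝ) = (M:ℝ)+1 := by push_cast; ring
    rw [hcast]
    exact le_trans (stepA' hμ0 hM hμj) ih

lemma chainB (hμ0 : 0 < μ) {K M : ℕ} (hμK : μ ≤ K) (hKM : K ≤ M) (hjμ : (j:ℝ) ≤ μ - 1) :
    SB K (μ/(K:ℝ)) j ≤ SB M (μ/(M:ℝ)) j := by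
  induction M, hKM using Nat.le_induction with
  | base => exact le_refl _
  | succ M hKM ih =>
    have hM : μ ≤ (M:ℝ) := le_trans hμK (by exact_mod_cast hKM)
    have hcast : (((M+1):ℕ):ℝ) = (M:ℝ)+1 := by push_cast; ring
    rw [hcast]
    exact le_trans ih (stepB hμ0 hM hjμ)

end Steps

lemma SB_anti_p {n j : ℕ} (hj : j + 1 ≤ n) {s r : ℝ} (hs : 0 ≤ s) (hsr : s ≤ r)
    (hr : r ≤ 1) : SB n r j ≤ SB n s j := by
  obtain ⟨N, rfl⟩ : ∃ N, n = N + 1 := ⟨n - 1, by omega⟩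
  have hjN : j ≤ N := by omega
  have hanti : AntitoneOn (fun t => SB (N+1) t j) (Set.Icc s r) := by
    apply antitoneOn_of_deriv_nonpos (convex_Icc _ _)
    · intro x _
      exact (hasDerivAt_SB hjN x).continuousAt.continuousWithinAt
    · intro x _
      exact (hasDerivAt_SB hjN x).differentiableAt.differentiableWithinAt
    · intro x hx
      rw [interior_Icc, Set.mem_Ioo] at hx
      rw [(hasDerivAt_SB hjN x).deriv]
      have h0 : (0:ℝ) ≤ x := le_trans hs hx.1.le
      have h1 : x ≤ 1 := le_trans hx.2.le hr
      have := pmf_nonneg (n := N) (p := x) h0 h1 j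
      nlinarith
  exact hanti (Set.left_mem_Icc.2 hsr) (Set.right_mem_Icc.2 hsr) hsr

lemma pmf_compl {n k : ℕ} (hk : k ≤ n) (p : ℝ) :
    binomPMF n (1-p) k = binomPMF n p (n-k) := by
  unfold binomPMF
  rw [Nat.choose_symm hk, Nat.sub_sub_self hk, sub_sub_cancel]
  ring

lemma SB_compl {n j : ℕ} (hj : j + 1 ≤ n) (p : ℝ) :
    SB n p j + SB n (1-p) (n - j - 1) = 1 := by
  have e1 : (n - j - 1) + 1 = n - j := by omega
  have h2 : SB n (1-p) (n-j-1) = ∑ k ∈ Finset.range (n-j), binomPMF n p (n-k) := by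
    unfold SB
    rw [e1]
    apply Finset.sum_congr rfl
    intro k hkmem
    simp only [Finset.mem_range] at hkmem
    exact pmf_compl (by omega) p
  have h3 : ∑ k ∈ Finset.range (n-j), binomPMF n p (n-k)
      = ∑ k ∈ Finset.range (n-j), binomPMF n p (j+1+k) := by
    rw [← Finset.sum_range_reflect (fun k => binomPMF n p (j+1+k)) (n-j)]
    apply Finset.sum_congr rfl
    intro k hkmem
    simp only [Finset.mem_range] at hkmem
    congr 1
    omega
  have h4 : SB n p j + ∑ k ∈ Finset.range (n-j), binomPMF n p (j+1+k) = SB n p n := by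
    unfold SB
    rw [show n + 1 = (j+1) + (n-j) by omega]
    exact (Finset.sum_range_add (fun k => binomPMF n p k) (j+1) (n-j)).symm
  rw [h2, h3, h4, SB_self_eq_one]

lemma anchor (k : ℕ) (hk : 1 ≤ k) :
    SB (2*k) (1/2 : ℝ) (k-1) ≤ 1/2 ∧ (1/2 : ℝ) ≤ SB (2*k) (1/2 : ℝ) k := by
  have hcompl := SB_compl (n := 2*k) (j := k-1) (by omega) (1/2 : ℝ)
  have e1 : (1:ℝ) - 1/2 = 1/2 := by norm_num
  have e2 : 2*k - (k-1) - 1 = k := by omega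
  rw [e1, e2] at hcompl
  have hmono : SB (2*k) (1/2 : ℝ) (k-1) ≤ SB (2*k) (1/2 : ℝ) k :=
    SB_mono_j (by norm_num) (by norm_num) (by omega)
  constructor <;> linarith

lemma Gge (k N : ℕ) (hk : 1 ≤ k) (hkN : k ≤ N) (hN2k : N ≤ 2*k) :
    (1/2 : ℝ) ≤ SB N ((k:ℝ)/(N:ℝ)) k := by
  have h := chainA (j := k) (μ := (k:ℝ)) (by exact_mod_cast hk) (K := N) (M := 2*k)
    (by exact_mod_cast hkN) hN2k (le_refl _)
  have e : ((k:ℝ)/((2*k:ℕ):ℝ)) = 1/2 := by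
    have : ((2*k:ℕ):ℝ) = 2*(k:ℝ) := by push_cast; ring
    rw [this]
    rw [div_eq_iff (by positivity)]
    ring
  rw [e] at h
  exact le_trans (anchor k hk).2 h

lemma Hge (k N : ℕ) (hk : 1 ≤ k) (hkN : k ≤ N) :
    SB N ((k:ℝ)/(N:ℝ)) (k-1) ≤ 1/2 := by
  have hcast : ((k-1:ℕ):ℝ) = (k:ℝ) - 1 := by
    push_cast [Nat.cast_sub hk]
    ring
  rcases le_or_gt N (2*k) with h2k | h2k
  · have h := chainB (j := k-1) (μ := (k:ℝ)) (by exact_mod_cast hk) (K := N) (M := 2*k)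
      (by exact_mod_cast hkN) h2k (by rw [hcast])
    have e : ((k:ℝ)/((2*k:ℕ):ℝ)) = 1/2 := by
      have : ((2*k:ℕ):ℝ) = 2*(k:ℝ) := by push_cast; ring
      rw [this, div_eq_iff (by positivity)]
      ring
    rw [e] at h
    exact le_trans h (anchor k hk).1
  · have hN0 : (0:ℝ) < (N:ℝ) := by
      have : 0 < N := by omega
      exact_mod_cast this
    have hcompl := SB_compl (n := N) (j := k-1) (by omega) ((k:ℝ)/(N:ℝ))
    have e2 : N - (k-1) - 1 = N - k := by omega
    have e3 : (1:ℝ) - (k:ℝ)/(N:ℝ) = ((N-k:ℕ):ℝ)/(N:ℝ) := by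
      rw [Nat.cast_sub hkN]
      field_simp
    rw [e2, e3] at hcompl
    have hG : (1/2:ℝ) ≤ SB N (((N-k:ℕ):ℝ)/(N:ℝ)) (N-k) :=
      Gge (N-k) N (by omega) (by omega) (by omega)
    linarith

lemma M1 {n j : ℕ} {p : ℝ} (hn : 1 ≤ n) (hp0 : 0 ≤ p) (hp1 : p ≤ 1)
    (hj : (j:ℝ) ≤ (n:ℝ)*p - 1) : SB n p j ≤ 1/2 := by
  have hN0 : (0:ℝ) < (n:ℝ) := by exact_mod_cast hn
  have hkle : ((j+1:ℕ):ℝ) ≤ (n:ℝ)*p := by push_cast; linarith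
  have hkn : j + 1 ≤ n := by
    have : ((j+1:ℕ):ℝ) ≤ (n:ℝ) := le_trans hkle (by nlinarith)
    exact_mod_cast this
  have hdiv : ((j+1:ℕ):ℝ)/(n:ℝ) ≤ p := by
    rw [div_le_iff₀ hN0]
    linarith [hkle]
  have h1 : SB n p j ≤ SB n (((j+1:ℕ):ℝ)/(n:ℝ)) j :=
    SB_anti_p hkn (by positivity) hdiv hp1
  have h2 : SB n (((j+1:ℕ):ℝ)/(n:ℝ)) ((j+1)-1) ≤ 1/2 := Hge (j+1) n (by omega) hkn
  simp only [Nat.add_sub_cancel] at h2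
  exact le_trans h1 h2

lemma stirling_anti {i i' : ℕ} (hi : 1 ≤ i) (h : i ≤ i') :
    Stirling.stirlingSeq i' ≤ Stirling.stirlingSeq i := by
  obtain ⟨a, rfl⟩ : ∃ a, i = a + 1 := ⟨i - 1, by omega⟩
  obtain ⟨b, rfl⟩ : ∃ b, i' = b + 1 := ⟨i' - 1, by omega⟩
  exact Stirling.stirlingSeq'_antitone (by omega : a ≤ b)

lemma stirling_lower {i : ℕ} (hi : 1 ≤ i) : Real.sqrt π ≤ Stirling.stirlingSeq i := by
  obtain ⟨a, rfl⟩ : ∃ a, i = a + 1 := ⟨i - 1, by omega⟩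
  have htd : Filter.Tendsto (Stirling.stirlingSeq ∘ Nat.succ) Filter.atTop (nhds (Real.sqrt π)) :=
    Stirling.tendsto_stirlingSeq_sqrt_pi.comp (Filter.tendsto_add_atTop_nat 1)
  exact Stirling.stirlingSeq'_antitone.le_of_tendsto htd a

lemma stirling_pos {i : ℕ} (hi : 1 ≤ i) : 0 < Stirling.stirlingSeq i := by
  obtain ⟨a, rfl⟩ : ∃ a, i = a + 1 := ⟨i - 1, by omega⟩
  exact Stirling.stirlingSeq'_pos a

lemma stirling_fact {i : ℕ} (hi : 1 ≤ i) :
    ((Nat.factorial i : ℕ) : ℝ) = Stirling.stirlingSeq i * (Real.sqrt (2*(i:ℝ)) * ((i:ℝ)/Real.exp 1)^i) := by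
  have h1 : (0:ℝ) < Real.sqrt (2*(i:ℝ)) := by
    apply Real.sqrt_pos.2
    have : (1:ℝ) ≤ (i:ℝ) := by exact_mod_cast hi
    linarith
  have h2 : (0:ℝ) < ((i:ℝ)/Real.exp 1)^i := by
    apply pow_pos
    apply div_pos _ (Real.exp_pos 1)
    have : (1:ℝ) ≤ (i:ℝ) := by exact_mod_cast hi
    linarith
  rw [Stirling.stirlingSeq]
  field_simp

lemma log_le_cubic {u : ℝ} (hu0 : 0 ≤ u) : Real.log (1+u) ≤ u - u^2/2 + u^3/3 := by
  have key : ∀ x : ℝ, 0 ≤ x → HasDerivAt (fun y => y - y^2/2 + y^3/3 - Real.log (1+y))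
      (x^2*x/(1+x)) x := by
    intro x hx
    have hlog : HasDerivAt (fun y : ℝ => Real.log (1+y)) (1/(1+x)) x := by
      have h0 : HasDerivAt (fun y : ℝ => 1+y) 1 x := by
        simpa using (hasDerivAt_id x).const_add 1
      have := (Real.hasDerivAt_log (by linarith : (1:ℝ)+x ≠ 0)).comp x h0
      exact this.congr_deriv (by ring)
    have hpoly : HasDerivAt (fun y : ℝ => y - y^2/2 + y^3/3) (1 - x + x^2) x := by
      have h1 : HasDerivAt (fun y : ℝ => y) 1 x := hasDerivAt_id x
      have h2 : HasDerivAt (fun y : ℝ => y^2) (2*x) x := by simpa using hasDerivAt_pow 2 x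
      have h3 : HasDerivAt (fun y : ℝ => y^3) (3*x^2) x := by simpa using hasDerivAt_pow 3 x
      have := (h1.sub (h2.div_const 2)).add (h3.div_const 3)
      exact this.congr_deriv (by ring)
    have := hpoly.sub hlog
    refine this.congr_deriv ?_
    field_simp
    ring
  have hmono : MonotoneOn (fun y : ℝ => y - y^2/2 + y^3/3 - Real.log (1+y)) (Set.Ici 0) := by
    apply monotoneOn_of_deriv_nonneg (convex_Ici 0)
    · intro x hx
      exact (key x hx).continuousAt.continuousWithinAt
    · intro x hx
      rw [interior_Ici] at hx
      exact (key x (le_of_lt hx)).differentiableAt.differentiableWithinAt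
    · intro x hx
      rw [interior_Ici] at hx
      rw [(key x (Set.mem_Ioi.1 hx).le).deriv]
      exact div_nonneg (mul_nonneg (sq_nonneg x) (Set.mem_Ioi.1 hx).le) (by have := Set.mem_Ioi.1 hx; linarith)
  have := hmono (Set.self_mem_Ici) (Set.mem_Ici.2 hu0) hu0
  simp only [Real.log_one] at this
  norm_num at this
  linarith [this]

lemma exp98_lt_pi : Real.exp (9/8 : ℝ) < π := by
  have h8 : Real.exp (9/8 : ℝ)^8 = Real.exp 9 := by
    rw [← Real.exp_nat_mul]
    norm_num
  have h9 : Real.exp 9 = Real.exp 1 ^ 9 := by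
    rw [← Real.exp_nat_mul]
    norm_num
  have hlt : Real.exp 1 ^ 9 < 2.7182818286^9 := by
    apply pow_lt_pow_left₀ Real.exp_one_lt_d9 (Real.exp_pos 1).le
    norm_num
  have hnum : (2.7182818286:ℝ)^9 < 3.1^8 := by norm_num
  have hmain : Real.exp (9/8 : ℝ) < 3.1 := by
    have hcomb : Real.exp (9/8:ℝ)^8 < (3.1:ℝ)^8 := by
      rw [h8, h9]
      linarith
    exact lt_of_pow_lt_pow_left₀ 8 (by norm_num) hcomb
  linarith [Real.pi_gt_d6]

lemma aux_tail_strict {t Mr : ℝ} (ht0 : 0 < t) (hMr : 1 ≤ Mr) :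
    ((2*Mr+1)) * (-(t/Mr)) < -(2*t) := by
  have hMr0 : 0 < Mr := by linarith
  have he : (2*Mr+1) * (t/Mr) = 2*t + t/Mr := by
    field_simp
  have hpos : 0 < t/Mr := div_pos ht0 hMr0
  nlinarith [he, hpos]

lemma aux_e_sq : (27:ℝ)/8 < Real.exp 1 ^ 2 / 2 := by
  nlinarith [Real.exp_one_gt_d9]

lemma aux_cubic {u : ℝ} (hu0 : 0 < u) (hu4 : u ≤ 1/4) :
    (1+u) * (u - u^2/2 + u^3/3) ≤ (9/8) * u := by
  nlinarith [mul_nonneg (mul_nonneg hu0.le hu0.le) (by linarith : (0:ℝ) ≤ 1/4 - u),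
    mul_pos hu0 hu0]

set_option maxHeartbeats 2000000 in
lemma pmf_lt_bound {n k : ℕ} {p : ℝ} (hk : 1 ≤ k) (hp1 : p < 1)
    (h0 : (k:ℝ) < (n:ℝ)*p) (h1 : (n:ℝ)*p < (k:ℝ)+1) :
    binomPMF n p k < Real.sqrt (1/(2 * Real.exp 1 * (n:ℝ) * p * (1-p))) := by
  have hK1 : (1:ℝ) ≤ (k:ℝ) := by exact_mod_cast hk
  have hp0 : 0 < p := by
    by_contra h
    push_neg at h
    have hn0 : (0:ℝ) ≤ (n:ℝ) := Nat.cast_nonneg n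
    nlinarith
  have hnp0 : (0:ℝ) < (n:ℝ)*p := by linarith
  have hn0 : (0:ℝ) < (n:ℝ) := by nlinarith
  have hkn : k < n := by
    have : (k:ℝ) < (n:ℝ) := by nlinarith
    exact_mod_cast this
  obtain ⟨M, rfl⟩ : ∃ M, n = k + M := ⟨n - k, by omega⟩
  have hM1 : 1 ≤ M := by omega
  have hM1r : (1:ℝ) ≤ (M:ℝ) := by exact_mod_cast hM1
  -- notation
  set e : ℝ := Real.exp 1 with he
  have he0 : 0 < e := Real.exp_pos 1
  set K : ℝ := (k:ℝ) with hKdef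
  set Mr : ℝ := (M:ℝ) with hMdef
  set N : ℝ := ((k+M:ℕ):ℝ) with hNdef
  have hNKM : N = K + Mr := by rw [hNdef, hKdef, hMdef]; push_cast; ring
  have hK0 : 0 < K := by linarith
  have hMr0 : 0 < Mr := by linarith
  have hN0' : 0 < N := by rw [hNKM]; linarith
  set q : ℝ := 1 - p with hq
  have hq0 : 0 < q := by rw [hq]; linarith
  set t : ℝ := N*p - K with ht
  have ht0 : 0 < t := by rw [ht]; simp only [hNdef, hKdef] at *; linarith [h0]
  have ht1 : t < 1 := by rw [ht]; simp only [hNdef, hKdef] at *; linarith [h1]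
  set A : ℝ := N*p/K with hA
  set B : ℝ := N*q/Mr with hB
  have hA0 : 0 < A := by rw [hA]; positivity
  have hB0 : 0 < B := by
    rw [hB]
    have : 0 < N*q := by positivity
    positivity
  set sn : ℝ := Stirling.stirlingSeq (k+M) with hsn
  set sk : ℝ := Stirling.stirlingSeq k with hsk
  set sM : ℝ := Stirling.stirlingSeq M with hsM
  have hsn0 : 0 < sn := stirling_pos (by omega)
  have hsk0 : 0 < sk := stirling_pos hk
  have hsM0 : 0 < sM := stirling_pos hM1
  have hsnM : sn ≤ sM := stirling_anti hM1 (by omega)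
  have hskpi : Real.sqrt π ≤ sk := stirling_lower hk
  -- square-root splitting
  have hsq2K : (0:ℝ) < Real.sqrt (2*K) := Real.sqrt_pos.2 (by linarith)
  have hsq2M : (0:ℝ) < Real.sqrt (2*Mr) := Real.sqrt_pos.2 (by linarith)
  have hsqQ : (0:ℝ) < Real.sqrt (N/(2*K*Mr)) := Real.sqrt_pos.2 (by positivity)
  have hs : Real.sqrt (N/(2*K*Mr)) * (Real.sqrt (2*K) * Real.sqrt (2*Mr))
      = Real.sqrt (2*N) := by
    rw [← Real.sqrt_mul (by positivity : (0:ℝ) ≤ 2*K) (2*Mr),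
        ← Real.sqrt_mul (by positivity : (0:ℝ) ≤ N/(2*K*Mr))]
    congr 1
    field_simp
  -- exact expression for the pmf
  have hEq : binomPMF (k+M) p k
      = (sn/(sk*sM)) * Real.sqrt (N/(2*K*Mr)) * ((A)^k * (B)^M) := by
    have hch : (((k+M).choose k : ℕ) : ℝ)
        = ((Nat.factorial (k+M) : ℕ) : ℝ)
          / (((Nat.factorial k : ℕ) : ℝ) * ((Nat.factorial M : ℕ) : ℝ)) := by
      rw [Nat.cast_choose ℝ (Nat.le_add_right k M), show k + M - k = M from by omega]
    unfold binomPMF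
    rw [show (k+M) - k = M by omega]
    rw [hch, stirling_fact (show 1 ≤ k+M by omega), stirling_fact hk, stirling_fact hM1]
    rw [← hsn, ← hsk, ← hsM, ← he, ← hNdef, ← hKdef, ← hMdef, ← hq, ← hs, hNKM]
    have hek : (0:ℝ) < (K/e)^k := by positivity
    have heM : (0:ℝ) < (Mr/e)^M := by positivity
    rw [hA, hB, hNKM]
    simp only [div_pow, mul_pow]
    field_simp
    ring
  -- upper bound using sn ≤ sM
  have hb_le : binomPMF (k+M) p k ≤ (1/sk) * Real.sqrt (N/(2*K*Mr)) * ((A)^k * (B)^M) := by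
    rw [hEq]
    have h1' : sn/(sk*sM) ≤ 1/sk := by
      rw [div_le_div_iff₀ (by positivity) hsk0]
      calc sn * sk = sk * sn := by ring
      _ ≤ sk * sM := mul_le_mul_of_nonneg_left hsnM hsk0.le
      _ = 1 * (sk * sM) := by ring
    have h2' : (0:ℝ) ≤ Real.sqrt (N/(2*K*Mr)) * ((A)^k * (B)^M) := by positivity
    have h3' := mul_le_mul_of_nonneg_right h1' h2'
    calc sn / (sk * sM) * Real.sqrt (N/(2*K*Mr)) * (A^k * B^M)
        = sn / (sk * sM) * (Real.sqrt (N/(2*K*Mr)) * (A^k * B^M)) := by ring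
    _ ≤ (1/sk) * (Real.sqrt (N/(2*K*Mr)) * (A^k * B^M)) := h3'
    _ = (1/sk) * Real.sqrt (N/(2*K*Mr)) * (A^k * B^M) := by ring
  -- key analytic inequality
  have hBval : B = 1 - t/Mr := by
    rw [hB, ht, hq, hNKM]
    field_simp
    ring
  have hBlt : B^(2*M+1) < Real.exp (-(2*t)) := by
    have h1' : B ≤ Real.exp (-(t/Mr)) := by
      rw [hBval]
      have := Real.add_one_le_exp (-(t/Mr))
      linarith
    have h2' : B^(2*M+1) ≤ Real.exp (-(t/Mr))^(2*M+1) :=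
      pow_le_pow_left₀ hB0.le h1' _
    have h3' : Real.exp (-(t/Mr))^(2*M+1) = Real.exp (((2*M+1:ℕ):ℝ) * (-(t/Mr))) := by
      rw [Real.exp_nat_mul]
    have h4' : Real.exp (((2*M+1:ℕ):ℝ) * (-(t/Mr))) < Real.exp (-(2*t)) := by
      apply Real.exp_lt_exp.2
      have hcast : ((2*M+1:ℕ):ℝ) = 2*Mr + 1 := by rw [hMdef]; push_cast; ring
      rw [hcast]
      exact aux_tail_strict ht0 hM1r
    calc B^(2*M+1) ≤ Real.exp (-(t/Mr))^(2*M+1) := h2'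
    _ = _ := h3'
    _ < _ := h4'
  have hAval : A = (K+t)/K := by
    rw [hA, ht]
    field_simp; ring
  have hAle : A^(2*k+1) ≤ Real.exp (2*t-1) * ((K+1/2)/K)^(2*k+1) := by
    have hsplit : A = ((K+t)/(K+1/2)) * ((K+1/2)/K) := by
      rw [hAval]
      field_simp
    have hfac1 : (K+t)/(K+1/2) ≤ Real.exp ((t-1/2)/(K+1/2)) := by
      have := Real.add_one_le_exp ((t-1/2)/(K+1/2))
      have heq : (t-1/2)/(K+1/2) + 1 = (K+t)/(K+1/2) := by
        field_simp
        ring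
      linarith [heq ▸ this]
    have hpos1 : (0:ℝ) ≤ (K+t)/(K+1/2) := by positivity
    have hpos2 : (0:ℝ) ≤ (K+1/2)/K := by positivity
    calc A^(2*k+1) = ((K+t)/(K+1/2))^(2*k+1) * ((K+1/2)/K)^(2*k+1) := by
          rw [hsplit, mul_pow]
    _ ≤ Real.exp ((t-1/2)/(K+1/2))^(2*k+1) * ((K+1/2)/K)^(2*k+1) := by
          apply mul_le_mul_of_nonneg_right (pow_le_pow_left₀ hpos1 hfac1 _) (by positivity)
    _ = Real.exp (((2*k+1:ℕ):ℝ) * ((t-1/2)/(K+1/2))) * ((K+1/2)/K)^(2*k+1) := by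
          rw [Real.exp_nat_mul]
    _ = Real.exp (2*t-1) * ((K+1/2)/K)^(2*k+1) := by
          congr 2
          have hcast : ((2*k+1:ℕ):ℝ) = 2*K + 1 := by rw [hKdef]; push_cast; ring
          rw [hcast]
          field_simp
  -- product bound : e * A^(2k+1) * B^(2M+1) < R_K
  have hprod : e * (A^(2*k+1) * B^(2*M+1)) < ((K+1/2)/K)^(2*k+1) := by
    have hRKpos : (0:ℝ) < ((K+1/2)/K)^(2*k+1) := by positivity
    have hexp1 : (0:ℝ) < Real.exp (2*t-1) * ((K+1/2)/K)^(2*k+1) := by positivity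
    have step1 : A^(2*k+1) * B^(2*M+1)
        < (Real.exp (2*t-1) * ((K+1/2)/K)^(2*k+1)) * Real.exp (-(2*t)) := by
      calc A^(2*k+1) * B^(2*M+1) ≤ (Real.exp (2*t-1) * ((K+1/2)/K)^(2*k+1)) * B^(2*M+1) := by
            apply mul_le_mul_of_nonneg_right hAle (by positivity)
      _ < _ := by
            apply mul_lt_mul_of_pos_left hBlt hexp1
    have hee : e * ((Real.exp (2*t-1) * ((K+1/2)/K)^(2*k+1)) * Real.exp (-(2*t)))
        = ((K+1/2)/K)^(2*k+1) := by
      rw [he]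
      rw [show Real.exp 1 * (Real.exp (2*t-1) * ((K+1/2)/K)^(2*k+1) * Real.exp (-(2*t)))
          = (Real.exp 1 * Real.exp (2*t-1) * Real.exp (-(2*t))) * ((K+1/2)/K)^(2*k+1) from by ring]
      rw [← Real.exp_add, ← Real.exp_add]
      norm_num
    calc e * (A^(2*k+1) * B^(2*M+1))
        < e * ((Real.exp (2*t-1) * ((K+1/2)/K)^(2*k+1)) * Real.exp (-(2*t))) :=
          mul_lt_mul_of_pos_left step1 he0
    _ = _ := hee
  -- R_K ≤ sk^2
  have hRk : ((K+1/2)/K)^(2*k+1) ≤ sk^2 := by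
    rcases eq_or_lt_of_le hk with hk1 | hk2
    · -- k = 1
      have : k = 1 := hk1.symm
      subst this
      have hKval : K = 1 := by rw [hKdef]; norm_num
      rw [hKval]
      have hskval : sk = Real.exp 1 / Real.sqrt 2 := by
        rw [hsk, Stirling.stirlingSeq_one]
      rw [hskval]
      have h2 : (Real.exp 1 / Real.sqrt 2)^2 = Real.exp 1 ^ 2 / 2 := by
        rw [div_pow, Real.sq_sqrt (by norm_num : (0:ℝ) ≤ 2)]
      rw [h2]
      have := aux_e_sq
      norm_num at this ⊢
      linarith
    · -- k ≥ 2
      have hk2' : 2 ≤ k := hk2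
      have hK2 : (2:ℝ) ≤ K := by rw [hKdef]; exact_mod_cast hk2'
      set u : ℝ := 1/(2*K) with hu
      have hu0 : 0 < u := by rw [hu]; positivity
      have hu14 : u ≤ 1/4 := by
        rw [hu]
        rw [div_le_div_iff₀ (by linarith) (by norm_num)]
        linarith
      have hKu : (K+1/2)/K = 1 + u := by
        rw [hu]
        field_simp
      have hlogle : Real.log (1+u) ≤ u - u^2/2 + u^3/3 := log_le_cubic hu0.le
      have hcast : ((2*k+1:ℕ):ℝ) = 2*K+1 := by rw [hKdef]; push_cast; ring
      have hexp_form : ((K+1/2)/K)^(2*k+1) = Real.exp (((2*k+1:ℕ):ℝ) * Real.log (1+u)) := by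
        rw [Real.exp_nat_mul, Real.exp_log (by linarith), hKu]
      rw [hexp_form]
      have hbound : ((2*k+1:ℕ):ℝ) * Real.log (1+u) ≤ 9/8 := by
        rw [hcast]
        have h1' : (2*K+1) * Real.log (1+u) ≤ (2*K+1) * (u - u^2/2 + u^3/3) := by
          apply mul_le_mul_of_nonneg_left hlogle (by linarith)
        have hKu' : (2*K+1) * u = 1 + u := by
          rw [hu]
          field_simp
        have hcub := aux_cubic hu0 hu14
        have h2' : (2*K+1) * (u - u^2/2 + u^3/3) ≤ 9/8 := by
          have hx : ((2*K+1) * (u - u^2/2 + u^3/3)) * u = ((1+u) * (u - u^2/2 + u^3/3)) := by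
            linear_combination (u - u^2/2 + u^3/3) * hKu' 
          have hy : ((2*K+1) * (u - u^2/2 + u^3/3)) * u ≤ (9/8) * u := by
            rw [hx]; exact hcub
          exact le_of_mul_le_mul_right hy hu0
        linarith
      have hskpi2 : π ≤ sk^2 := by
        have h1' : Real.sqrt π ^ 2 ≤ sk^2 := by
          apply pow_le_pow_left₀ (Real.sqrt_nonneg π) hskpi
        rwa [Real.sq_sqrt Real.pi_pos.le] at h1'
      refine le_of_lt ?_
      calc Real.exp (((2*k+1:ℕ):ℝ) * Real.log (1+u)) ≤ Real.exp (9/8) :=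
            Real.exp_le_exp.2 hbound
      _ < π := exp98_lt_pi
      _ ≤ sk^2 := hskpi2
  -- conclude
  set R : ℝ := (1/sk) * Real.sqrt (N/(2*K*Mr)) * ((A)^k * (B)^M) with hR
  have hR0 : 0 < R := by
    rw [hR]
    positivity
  have hX0 : (0:ℝ) < 2 * e * N * p * q := by positivity
  have hR2 : R^2 * (2 * e * N * p * q) = (e * (A^(2*k+1) * B^(2*M+1))) / sk^2 := by
    rw [hR, mul_pow, mul_pow, Real.sq_sqrt (by positivity : (0:ℝ) ≤ N/(2*K*Mr))]
    rw [hA, hB]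
    simp only [div_pow, mul_pow]
    rw [show 2*k+1 = k*2+1 from by ring, show 2*M+1 = M*2+1 from by ring]
    simp only [pow_succ, pow_mul]
    field_simp
  have hRX : R^2 * (2 * e * N * p * q) < 1 := by
    rw [hR2]
    rw [div_lt_one (by positivity)]
    exact lt_of_lt_of_le hprod hRk
  have hRlt : R < Real.sqrt (1/(2 * e * N * p * q)) := by
    have h1' : R^2 < 1/(2 * e * N * p * q) := by
      rw [lt_div_iff₀ hX0]
      exact hRX
    have := Real.sqrt_lt_sqrt (sq_nonneg R) h1'
    rwa [Real.sqrt_sq hR0.le] at this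
  have hfinal : binomPMF (k+M) p k < Real.sqrt (1/(2 * e * N * p * q)) :=
    lt_of_le_of_lt hb_le hRlt
  convert hfinal using 3


lemma exp_two_div_e_gt_two : (2:ℝ) < Real.exp (2 / Real.exp 1) := by
  have h1 : Real.log 2 < 2 / Real.exp 1 := by
    have he : Real.exp 1 < 2.7182818286 := Real.exp_one_lt_d9
    have he0 : (0:ℝ) < Real.exp 1 := Real.exp_pos 1
    have h2 : (2:ℝ)/2.7182818286 < 2 / Real.exp 1 := by
      apply div_lt_div_of_pos_left (by norm_num) he0 he
    have h3 : Real.log 2 < 0.6931471808 := Real.log_two_lt_d9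
    nlinarith
  calc (2:ℝ) = Real.exp (Real.log 2) := (Real.exp_log (by norm_num)).symm
  _ < Real.exp (2 / Real.exp 1) := Real.exp_lt_exp.2 h1

end BinomAux

open BinomAux Real

set_option maxHeartbeats 4000000 in
theorem binomQuantile_ge_of_concentrated
    (n m : ℕ) (hn : 0 < n) (hm : 0 < m) (a : ℝ) (ha : 1 ≤ a)
    (hna : (n : ℝ) = a * m)
    (p : ℝ) (hp : 0 < p) (hap : a * p ≤ 1) :
    ∀ u : ℝ, 1 / 2 + Real.sqrt (1 / (2 * Real.exp 1 * n * p * (1 - p))) ≤ u → u ≤ 1 →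
      binomQuantile n p u ≥ binomQuantile m (a * p) u := by
  intro u hu1 hu2
  by_cases hp1 : p = 1
  · -- degenerate case p = 1 forces a = 1 and n = m
    have ha1 : a = 1 := by
      subst hp1
      rw [mul_one] at hap
      linarith
    have hnm : n = m := by
      rw [ha1, one_mul] at hna
      exact_mod_cast hna
    subst hnm
    rw [ha1, one_mul]
  · -- main case
    have hm0r : (0:ℝ) < (m:ℝ) := by exact_mod_cast hm
    have hn0r : (0:ℝ) < (n:ℝ) := by exact_mod_cast hn
    have hpa : p ≤ a * p := by nlinarith
    have hple : p ≤ 1 := le_trans hpa hap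
    have hp1' : p < 1 := lt_of_le_of_ne hple hp1
    set q : ℝ := a * p with hqdef
    have hq0 : 0 < q := by rw [hqdef]; nlinarith
    have hmn : m ≤ n := by
      have : (m:ℝ) ≤ (n:ℝ) := by rw [hna]; nlinarith
      exact_mod_cast this
    set μ : ℝ := (n:ℝ) * p with hμdef
    have hμ0 : 0 < μ := by rw [hμdef]; positivity
    have hμm : μ = (m:ℝ) * q := by rw [hμdef, hna, hqdef]; ring
    have hμlem : μ ≤ (m:ℝ) := by rw [hμm]; nlinarith
    have hμlen : μ ≤ (n:ℝ) := by rw [hμdef]; nlinarith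
    have hpμ : μ/(n:ℝ) = p := by rw [hμdef]; field_simp
    have hqμ : μ/(m:ℝ) = q := by rw [hμm]; field_simp
    set δ : ℝ := Real.sqrt (1 / (2 * Real.exp 1 * n * p * (1 - p))) with hδdef
    have hX0 : (0:ℝ) < 2 * Real.exp 1 * n * p * (1 - p) := by
      have := Real.exp_pos 1
      have h1p : (0:ℝ) < 1 - p := by linarith
      positivity
    have hδ0 : 0 < δ := by
      rw [hδdef]
      apply Real.sqrt_pos.2
      positivity
    have huhalf : 1/2 < u := by linarith
    have hu0 : 0 < u := by linarith
    -- non-vacuity: np(1-p) ≥ 2/e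
    have hnp2e : 2 / Real.exp 1 ≤ (n:ℝ) * p * (1 - p) := by
      have hδhalf : δ ≤ 1/2 := by linarith
      have h2 : 1 / (2 * Real.exp 1 * n * p * (1 - p)) ≤ 1/4 := by
        have := Real.sq_sqrt (le_of_lt (by positivity :
          (0:ℝ) < 1 / (2 * Real.exp 1 * n * p * (1 - p))))
        rw [hδdef] at hδhalf
        nlinarith [Real.sqrt_nonneg (1 / (2 * Real.exp 1 * n * p * (1 - p)))]
      rw [div_le_div_iff₀ hX0 (by norm_num)] at h2
      rw [div_le_iff₀ (Real.exp_pos 1)]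
      nlinarith
    -- inclusion of quantile sets
    have hsub : {x : ℝ | u ≤ binomCDF n p x} ⊆ {x : ℝ | u ≤ binomCDF m q x} := by
      intro x hx
      simp only [Set.mem_setOf_eq] at hx ⊢
      have hx0 : (0:ℝ) ≤ x := by
        by_contra h
        push_neg at h
        rw [cdf_neg n p h] at hx
        linarith
      rw [cdf_floor n p hx0] at hx
      rw [cdf_floor m q hx0]
      set j : ℕ := ⌊x⌋₊ with hj
      rcases le_or_gt m j with hjm | hjm
      · rw [min_eq_right hjm, SB_self_eq_one]
        exact hu2
      · have hjn : j < n := lt_of_lt_of_le hjm hmn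
        rw [min_eq_left hjm.le]
        rw [min_eq_left hjn.le] at hx
        by_cases hjμ : μ ≤ (j:ℝ)
        · -- tail regime : use the Anderson–Samuels chain
          have hch := chainA (j := j) (μ := μ) hμ0 (K := m) (M := n) hμlem hmn hjμ
          rw [hpμ, hqμ] at hch
          linarith
        · push_neg at hjμ
          exfalso
          rcases le_or_gt ((j:ℝ)) (μ - 1) with hj1 | hj1
          · have hM1 := M1 (n := n) (j := j) (p := p) hn hp.le hp1'.le
              (by rw [← hμdef]; exact hj1)
            linarith
          · rcases Nat.eq_zero_or_pos j with hj0 | hj0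
            · -- j = 0 : F(0) = (1-p)^n < 1/2
              have hSB0 : SB n p j = (1-p)^n := by
                rw [hj0]
                unfold SB binomPMF
                rw [Finset.sum_range_one]
                simp
              have hle1 : (1-p)^n ≤ Real.exp (-((n:ℝ)*p)) := by
                have h1 : (1-p) ≤ Real.exp (-p) := by
                  have := Real.add_one_le_exp (-p)
                  linarith
                calc (1-p)^n ≤ Real.exp (-p)^n := by
                      apply pow_le_pow_left₀ (by linarith) h1
                _ = Real.exp ((n:ℝ) * (-p)) := by rw [Real.exp_nat_mul]
                _ = Real.exp (-((n:ℝ)*p)) := by ring_nf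
              have hnp_ge : 2 / Real.exp 1 ≤ (n:ℝ)*p := by
                have h1p : 1 - p ≤ 1 := by linarith
                nlinarith
              have hlt : Real.exp (-((n:ℝ)*p)) < 1/2 := by
                have h1 : Real.exp (-((n:ℝ)*p)) ≤ Real.exp (-(2/Real.exp 1)) :=
                  Real.exp_le_exp.2 (by linarith)
                have h2 : Real.exp (-(2/Real.exp 1)) < 1/2 := by
                  rw [Real.exp_neg]
                  rw [inv_lt_comm₀ (Real.exp_pos _) (by norm_num)]
                  have := exp_two_div_e_gt_two
                  norm_num
                  linarith
                linarith
              linarith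
            · -- 1 ≤ j and μ-1 < j < μ : median + pmf bound
              have hsplit : SB n p j = SB n p (j-1) + binomPMF n p j := by
                unfold SB
                rw [show j + 1 = (j-1) + 1 + 1 from by omega, Finset.sum_range_succ]
                congr 2
                omega
              have hjcast : ((j-1:ℕ):ℝ) = (j:ℝ) - 1 := by
                push_cast [Nat.cast_sub hj0]
                ring
              have hM1 := M1 (n := n) (j := j-1) (p := p) hn hp.le hp1'.le
                (by rw [hjcast, ← hμdef]; linarith)
              have hpmf : binomPMF n p j < δ := by
                rw [hδdef]
                exact pmf_lt_bound hj0 hp1' (by rw [← hμdef]; exact hjμ)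
                  (by rw [← hμdef]; linarith)
              linarith
    -- conclude via sInf comparison
    unfold binomQuantile
    rw [ge_iff_le]
    apply csInf_le_csInf
    · refine ⟨0, fun x hx => ?_⟩
      simp only [Set.mem_setOf_eq] at hx
      by_contra h
      push_neg at h
      rw [cdf_neg m q h] at hx
      linarith
    · refine ⟨(n:ℝ), ?_⟩
      simp only [Set.mem_setOf_eq]
      rw [cdf_floor n p (by positivity), Nat.floor_natCast, min_self, SB_self_eq_one]
      exact hu2
    · exact hsub
end

section
/- Let n2 be a positive integer, 0 < p2 < p1 < 1, 0 < q1 ≤ 1 and 0 < q2 < 1 with q1/q2 ≥ p1/p2. Set n1 = (p2/p1)·n2 and suppose ⌈n1⌉ < n2 and ⌈n1⌉ ≥ 1. Then for every real x with 0 ≤ x ≤ n2·q2 − 1, F_{⌈n1⌉, q1}(x) < F_{n2, q2}(x). -/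
noncomputable def binomS (n : ℕ) (p : ℝ) (k : ℕ) : ℝ :=
  ∑ j ∈ Finset.range (k + 1), binomPMF n p j

lemma hasDerivAt_term (c : ℝ) (j m : ℕ) (q : ℝ) :
    HasDerivAt (fun t : ℝ => c * t ^ j * (1 - t) ^ m)
      (c * ((j : ℝ) * q ^ (j - 1) * (1 - q) ^ m)
        - c * ((m : ℝ) * q ^ j * (1 - q) ^ (m - 1))) q := by
  have h1 : HasDerivAt (fun t : ℝ => t ^ j) ((j : ℝ) * q ^ (j - 1)) q := hasDerivAt_pow j q
  have h2 : HasDerivAt (fun t : ℝ => (1 - t) ^ m) (-((m : ℝ) * (1 - q) ^ (m - 1))) q := by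
    have h3 : HasDerivAt (fun t : ℝ => 1 - t) (-1) q := by
      simpa using (hasDerivAt_id q).const_sub 1
    simpa [Function.comp_def] using ((hasDerivAt_pow m (1 - q)).comp q h3)
  have := (h1.const_mul c).mul h2
  exact this.congr_deriv (by ring)

noncomputable def vSeq (n : ℕ) (q : ℝ) : ℕ → ℝ
  | 0 => 0
  | (j + 1) => (n : ℝ) * ((n - 1).choose j : ℝ) * q ^ j * (1 - q) ^ (n - 1 - j)

lemma hasDerivAt_binomS (n k : ℕ) (hk : k < n) (q : ℝ) :
    HasDerivAt (fun t : ℝ => binomS n t k)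
      (-((n : ℝ) * ((n - 1).choose k : ℝ) * q ^ k * (1 - q) ^ (n - 1 - k))) q := by
  have key : ∀ j ∈ Finset.range (k + 1),
      HasDerivAt (fun t : ℝ => binomPMF n t j) (vSeq n q j - vSeq n q (j + 1)) q := by
    intro j hj
    have hjk : j ≤ k := Nat.lt_succ_iff.1 (Finset.mem_range.1 hj)
    have hjn : j < n := lt_of_le_of_lt hjk hk
    have h := hasDerivAt_term ((n.choose j : ℝ)) j (n - j) q
    have hpmf : (fun t : ℝ => binomPMF n t j)
        = fun t : ℝ => (n.choose j : ℝ) * t ^ j * (1 - t) ^ (n - j) := rfl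
    rw [hpmf]
    convert h using 1
    have e2 : n - j - 1 = n - 1 - j := by omega
    rw [e2]
    cases j with
    | zero => simp [vSeq]
    | succ i =>
      have hn1 : n - 1 + 1 = n := by omega
      have c1 : (i + 1) * n.choose (i + 1) = n * (n - 1).choose i := by
        have h2 := Nat.add_one_mul_choose_eq (n - 1) i
        simp only [Nat.succ_eq_add_one, hn1] at h2
        rw [h2]; ring
      have c2 : (n - (i + 1)) * n.choose (i + 1) = n * (n - 1).choose (i + 1) := by
        have h1 := Nat.choose_succ_right_eq n (i + 1)
        have h2 := Nat.add_one_mul_choose_eq (n - 1) (i + 1)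
        simp only [Nat.succ_eq_add_one, hn1] at h2
        rw [h2, h1]; ring
      have r1 : ((i : ℝ) + 1) * (n.choose (i + 1) : ℝ) = (n : ℝ) * ((n - 1).choose i : ℝ) := by
        exact_mod_cast c1
      have r2 : ((n : ℝ) - ((i : ℝ) + 1)) * (n.choose (i + 1) : ℝ)
          = (n : ℝ) * ((n - 1).choose (i + 1) : ℝ) := by
        have : ((n - (i + 1) : ℕ) : ℝ) = (n : ℝ) - ((i : ℝ) + 1) := by
          push_cast [Nat.cast_sub hjn.le]; ring
        rw [← this]; exact_mod_cast c2
      simp only [vSeq]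
      have ei : i + 1 - 1 = i := rfl
      have hcast : ((n - (i + 1) : ℕ) : ℝ) = (n : ℝ) - ((i : ℝ) + 1) := by
        push_cast [Nat.cast_sub hjn.le]; ring
      have e1 : n - (i + 1) = n - 1 - i := by omega
      rw [ei, hcast, e1]
      push_cast
      linear_combination (q ^ i * (1 - q) ^ (n - 1 - i)) * r1.symm
        - (q ^ (i + 1) * (1 - q) ^ (n - 1 - (i + 1))) * r2.symm
  have hsum := HasDerivAt.sum key
  have hts : ∑ j ∈ Finset.range (k + 1), (vSeq n q j - vSeq n q (j + 1))
      = vSeq n q 0 - vSeq n q (k + 1) := Finset.sum_range_sub' (vSeq n q) (k + 1)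
  rw [hts] at hsum
  show HasDerivAt (fun t : ℝ => ∑ j ∈ Finset.range (k + 1), binomPMF n t j) _ q
  rw [Finset.sum_fn] at hsum
  exact hsum.congr_deriv (by simp [vSeq])

lemma binomS_succ_eq (n k : ℕ) (hk : k ≤ n) (p : ℝ) :
    binomS (n + 1) p k = binomS n p k - p * binomPMF n p k := by
  induction k with
  | zero =>
    unfold binomS
    rw [Finset.sum_range_one, Finset.sum_range_one]
    simp only [binomPMF, Nat.choose_zero_right, Nat.cast_one, pow_zero, Nat.sub_zero, mul_one, one_mul]
    rw [pow_succ]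
    ring
  | succ i ih =>
    have hi : i ≤ n := by omega
    have hstep : binomPMF (n + 1) p (i + 1)
        = p * binomPMF n p i + (1 - p) * binomPMF n p (i + 1) := by
      unfold binomPMF
      have hpas : (n + 1).choose (i + 1) = n.choose i + n.choose (i + 1) := Nat.choose_succ_succ n i
      rw [hpas]
      have e1 : n + 1 - (i + 1) = n - i := by omega
      have e2 : n - i = (n - (i + 1)) + 1 := by omega
      rw [e1, e2, pow_succ, pow_succ]
      push_cast
      ring
    have hsum : ∀ m : ℕ, binomS m p (i + 1) = binomS m p i + binomPMF m p (i + 1) := by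
      intro m
      simp [binomS, Finset.sum_range_succ]
    rw [hsum, hsum, ih hi, hstep]
    ring

lemma binomS_anti (n k : ℕ) (hk : k < n) {a b : ℝ} (h0 : 0 ≤ a) (hab : a ≤ b) (hb1 : b ≤ 1) :
    binomS n b k ≤ binomS n a k := by
  have hconv : Convex ℝ (Set.Icc a b) := convex_Icc a b
  have hcont : ContinuousOn (fun t : ℝ => binomS n t k) (Set.Icc a b) := by
    intro t _
    exact ((hasDerivAt_binomS n k hk t).continuousAt).continuousWithinAt
  have hdiff : DifferentiableOn ℝ (fun t : ℝ => binomS n t k) (interior (Set.Icc a b)) := by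
    intro t _
    exact ((hasDerivAt_binomS n k hk t).differentiableAt).differentiableWithinAt
  have hderiv : ∀ t ∈ interior (Set.Icc a b), deriv (fun t : ℝ => binomS n t k) t ≤ 0 := by
    intro t ht
    rw [interior_Icc] at ht
    rw [(hasDerivAt_binomS n k hk t).deriv]
    have ht0 : 0 ≤ t := le_trans h0 (le_of_lt ht.1)
    have ht1 : t ≤ 1 := le_trans (le_of_lt ht.2) hb1
    have h1t : (0:ℝ) ≤ 1 - t := by linarith
    have : 0 ≤ (n : ℝ) * ((n - 1).choose k : ℝ) * t ^ k * (1 - t) ^ (n - 1 - k) :=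
      mul_nonneg (mul_nonneg (mul_nonneg (Nat.cast_nonneg _) (Nat.cast_nonneg _))
        (pow_nonneg ht0 _)) (pow_nonneg h1t _)
    linarith
  have := antitoneOn_of_deriv_nonpos hconv hcont hdiff hderiv
  exact this (Set.mem_Icc.2 ⟨le_refl a, hab⟩) (Set.mem_Icc.2 ⟨hab, le_refl b⟩) hab

lemma binomS_step (n k : ℕ) (p : ℝ) (hp0 : 0 < p) (hp1 : p ≤ 1)
    (hk : (k : ℝ) ≤ (n : ℝ) * p - 1) :
    binomS n p k < binomS (n + 1) ((n : ℝ) * p / ((n : ℝ) + 1)) k := by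
  have hk0 : (0 : ℝ) ≤ (k : ℝ) := Nat.cast_nonneg k
  have hn0 : (0 : ℝ) ≤ (n : ℝ) := Nat.cast_nonneg n
  have hn1R : (1 : ℝ) ≤ (n : ℝ) * p := by linarith
  have hnpos : (0 : ℝ) < (n : ℝ) := by nlinarith
  have hknR : (k : ℝ) < (n : ℝ) := by nlinarith
  have hkn : k < n := by exact_mod_cast hknR
  set p' : ℝ := (n : ℝ) * p / ((n : ℝ) + 1) with hp'def
  have hp'0 : 0 < p' := by positivity
  have hp'p : p' < p := by
    rw [hp'def, div_lt_iff₀ (by positivity)]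
    nlinarith
  have hp'1 : p' < 1 := by
    rw [hp'def, div_lt_one (by positivity)]
    nlinarith
  have hnp' : (n : ℝ) * p' = (n : ℝ) * p - p' := by
    rw [hp'def]; field_simp; ring
  have hknp' : (k : ℝ) < (n : ℝ) * p' := by rw [hnp']; linarith
  set m : ℕ := n - k with hm
  have hm1 : 1 ≤ m := by omega
  have hmcast : ((m : ℕ) : ℝ) = (n : ℝ) - (k : ℝ) := by
    rw [hm, Nat.cast_sub hkn.le]
  set g : ℝ → ℝ := fun t => t ^ k * (1 - t) ^ m with hg
  have hgd : ∀ t : ℝ, HasDerivAt g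
      ((k : ℝ) * t ^ (k - 1) * (1 - t) ^ m - (m : ℝ) * t ^ k * (1 - t) ^ (m - 1)) t := by
    intro t
    have := hasDerivAt_term 1 k m t
    simpa using this
  have hanti : StrictAntiOn g (Set.Icc p' p) := by
    apply strictAntiOn_of_deriv_neg (convex_Icc _ _)
    · exact fun t _ => (hgd t).continuousAt.continuousWithinAt
    · intro t ht
      rw [interior_Icc] at ht
      rw [(hgd t).deriv]
      have ht0 : 0 < t := lt_trans hp'0 ht.1
      have ht1 : t < 1 := lt_of_lt_of_le ht.2 hp1
      have h1t : 0 < 1 - t := by linarith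
      have hknt : (k : ℝ) < (n : ℝ) * t := lt_of_lt_of_le hknp' (by nlinarith [ht.1])
      cases k with
      | zero =>
        have hpos : 0 < (m : ℝ) * (1 - t) ^ (m - 1) :=
          mul_pos (by exact_mod_cast hm1) (pow_pos h1t _)
        simpa using hpos
      | succ i =>
        have hfac : (1 - t) ^ m = (1 - t) ^ (m - 1) * (1 - t) := by
          rw [← pow_succ]; congr 1; omega
        have heq : ((i + 1 : ℕ) : ℝ) * t ^ (i + 1 - 1) * (1 - t) ^ m
              - (m : ℝ) * t ^ (i + 1) * (1 - t) ^ (m - 1)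
            = t ^ i * (1 - t) ^ (m - 1) * (((i : ℝ) + 1) * (1 - t) - (m : ℝ) * t) := by
          rw [hfac, pow_succ]
          push_cast
          ring
        rw [heq]
        have hneg : ((i : ℝ) + 1) * (1 - t) - (m : ℝ) * t < 0 := by
          rw [hmcast]
          push_cast at hknt ⊢
          nlinarith
        have hpos : 0 < t ^ i * (1 - t) ^ (m - 1) :=
          mul_pos (pow_pos ht0 _) (pow_pos h1t _)
        exact mul_neg_of_pos_of_neg hpos hneg
  set C : ℝ := (n.choose k : ℝ) with hC
  have hCpos : 0 < C := by rw [hC]; exact_mod_cast Nat.choose_pos hkn.le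
  set h : ℝ → ℝ := fun t => ((n : ℝ) + 1) * C * g t with hh
  have hcont : Continuous h := by
    apply Continuous.mul continuous_const
    exact (continuous_pow k).mul ((continuous_const.sub continuous_id).pow m)
  have hderivAll : ∀ t ∈ Set.uIcc p' p, HasDerivAt (fun s => binomS (n + 1) s k) (-(h t)) t := by
    intro t _
    have hd := hasDerivAt_binomS (n + 1) k (by omega) t
    have e1 : n + 1 - 1 = n := by omega
    rw [e1, ← hm] at hd
    convert hd using 1
    rw [hh, hC, hg]
    push_cast
    ring
  have hFTC : ∫ t in p'..p, -(h t) = binomS (n + 1) p k - binomS (n + 1) p' k :=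
    intervalIntegral.integral_eq_sub_of_hasDerivAt hderivAll
      (hcont.neg.intervalIntegrable p' p)
  have I1 : ∫ t in p'..p, h t = binomS (n + 1) p' k - binomS (n + 1) p k := by
    rw [intervalIntegral.integral_neg] at hFTC
    linarith
  have hpp' : p - p' = p / ((n : ℝ) + 1) := by
    rw [hp'def]; field_simp; ring
  have I2 : ∫ _ in p'..p, h p = p * binomPMF n p k := by
    rw [intervalIntegral.integral_const, smul_eq_mul, hpp', hh, hC, hg]
    have hmne : n - k = m := rfl
    rw [binomPMF, hmne]
    field_simp
  have I3 : 0 < ∫ t in p'..p, (h t - h p) := by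
    apply intervalIntegral.intervalIntegral_pos_of_pos_on
    · exact ((hcont.sub continuous_const).intervalIntegrable p' p)
    · intro t ht
      have htm : t ∈ Set.Icc p' p := ⟨le_of_lt ht.1, le_of_lt ht.2⟩
      have hpm : p ∈ Set.Icc p' p := ⟨le_of_lt hp'p, le_refl p⟩
      have := hanti htm hpm ht.2
      have hfac : 0 < ((n : ℝ) + 1) * C * (g t - g p) :=
        mul_pos (mul_pos (by linarith) hCpos) (sub_pos.2 this)
      show 0 < ((n : ℝ) + 1) * C * g t - ((n : ℝ) + 1) * C * g p
      calc (0:ℝ) < ((n : ℝ) + 1) * C * (g t - g p) := hfac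
        _ = ((n : ℝ) + 1) * C * g t - ((n : ℝ) + 1) * C * g p := by ring
    · exact hp'p
  have I4 : ∫ t in p'..p, (h t - h p) = (∫ t in p'..p, h t) - ∫ _ in p'..p, h p :=
    intervalIntegral.integral_sub (hcont.intervalIntegrable p' p)
      (intervalIntegrable_const)
  have hsucc := binomS_succ_eq n k hkn.le p
  rw [I4, I1, I2] at I3
  linarith

lemma binomS_one (k : ℕ) (lam : ℝ) (hlam0 : 0 < lam) (hk : (k : ℝ) ≤ lam - 1)
    (a : ℕ) (hla : lam ≤ (a : ℝ)) :
    binomS a (lam / a) k < binomS (a + 1) (lam / ((a : ℕ) + 1 : ℕ)) k := by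
  have hapos : (0 : ℝ) < (a : ℝ) := lt_of_lt_of_le hlam0 hla
  have hmul : (a : ℝ) * (lam / a) = lam := by field_simp
  have h := binomS_step a k (lam / a) (by positivity)
    (by rw [div_le_one hapos]; exact hla) (by rw [hmul]; exact hk)
  have harg : (a : ℝ) * (lam / a) / ((a : ℝ) + 1) = lam / (((a : ℕ) + 1 : ℕ) : ℝ) := by
    rw [hmul]; push_cast; ring
  rwa [harg] at h

lemma binomS_chain (k : ℕ) (lam : ℝ) (hlam0 : 0 < lam) (hk : (k : ℝ) ≤ lam - 1)
    (a : ℕ) (hla : lam ≤ (a : ℝ)) :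
    ∀ b : ℕ, a < b → binomS a (lam / a) k < binomS b (lam / b) k := by
  intro b hab
  induction b, hab using Nat.le_induction with
  | base => exact binomS_one k lam hlam0 hk a hla
  | succ b hb ih =>
    refine lt_trans ih (binomS_one k lam hlam0 hk b ?_)
    have : (a : ℝ) ≤ (b : ℝ) := by exact_mod_cast Nat.le_of_succ_le hb
    linarith


lemma binomCDF_eq_S (n : ℕ) (p x : ℝ) (hx : 0 ≤ x) (hn : ⌊x⌋₊ ≤ n) :
    binomCDF n p x = binomS n p ⌊x⌋₊ := by
  unfold binomCDF binomS
  rw [← Finset.sum_subset (Finset.range_subset_range.2 (by omega) :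
      Finset.range (⌊x⌋₊ + 1) ⊆ Finset.range (n + 1))]
  · refine Finset.sum_congr rfl fun j hj => ?_
    rw [if_pos]
    have hj' : j ≤ ⌊x⌋₊ := Nat.lt_succ_iff.1 (Finset.mem_range.1 hj)
    calc (j : ℝ) ≤ (⌊x⌋₊ : ℝ) := by exact_mod_cast hj'
    _ ≤ x := Nat.floor_le hx
  · intro j _ hj
    rw [if_neg]
    intro hle
    exact hj (Finset.mem_range.2 (Nat.lt_succ_iff.2 (Nat.le_floor hle)))


theorem binomCDF_ceil_lt
    (n2 : ℕ) (hn2 : 0 < n2)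
    (p1 p2 q1 q2 : ℝ)
    (hp2 : 0 < p2) (hp12 : p2 < p1) (hp1 : p1 < 1)
    (hq1 : 0 < q1) (hq1' : q1 ≤ 1) (hq2 : 0 < q2) (hq2' : q2 < 1)
    (hratio : q1 / q2 ≥ p1 / p2)
    (n1 : ℝ) (hn1 : n1 = (p2 / p1) * n2)
    (hceil : ⌈n1⌉₊ < n2) (hceil1 : 1 ≤ ⌈n1⌉₊) :
    ∀ x : ℝ, 0 ≤ x → x ≤ (n2 : ℝ) * q2 - 1 →
      binomCDF ⌈n1⌉₊ q1 x < binomCDF n2 q2 x := by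
  intro x hx0 hx1
  set k := ⌊x⌋₊ with hkdef
  set m := ⌈n1⌉₊ with hmdef
  set lam : ℝ := (n2 : ℝ) * q2 with hlam
  have hkx : (k : ℝ) ≤ x := Nat.floor_le hx0
  have hklam : (k : ℝ) ≤ lam - 1 := le_trans hkx hx1
  have hk0 : (0 : ℝ) ≤ (k : ℝ) := Nat.cast_nonneg k
  have hlam1 : 1 ≤ lam := by linarith
  have hlam0 : 0 < lam := by linarith
  have hp1pos : 0 < p1 := lt_trans hp2 hp12
  have hn2R : (0 : ℝ) < (n2 : ℝ) := by exact_mod_cast hn2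
  have hn1pos : 0 < n1 := by rw [hn1]; positivity
  have hmR : n1 ≤ (m : ℝ) := Nat.le_ceil n1
  have hmpos : (0 : ℝ) < (m : ℝ) := lt_of_lt_of_le hn1pos hmR
  -- q* = lam / m  bounds
  have hlamn1 : lam / n1 = q2 * (p1 / p2) := by
    rw [hn1, hlam]; field_simp
  have hq2p : q2 * (p1 / p2) ≤ q1 := by
    rw [ge_iff_le, div_le_div_iff₀ hp2 hq2] at hratio
    have : q2 * (p1 / p2) = (p1 * q2) / p2 := by ring
    rw [this, div_le_iff₀ hp2]
    linarith
  have hdivle : lam / (m : ℝ) ≤ lam / n1 := by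
    gcongr
  have hqstar_le_q1 : lam / (m : ℝ) ≤ q1 := by
    rw [hlamn1] at hdivle
    linarith
  have hlam_le_m : lam ≤ (m : ℝ) := by
    have h1 : lam / (m : ℝ) ≤ 1 := le_trans hqstar_le_q1 hq1'
    rw [div_le_one hmpos] at h1
    exact h1
  have hk_lt_mR : (k : ℝ) < (m : ℝ) := by linarith
  have hk_lt_m : k < m := by exact_mod_cast hk_lt_mR
  have hlam_lt_n2 : lam < (n2 : ℝ) := by rw [hlam]; nlinarith
  have hk_lt_n2 : k < n2 := by
    have : (k : ℝ) < (n2 : ℝ) := by linarith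
    exact_mod_cast this
  rw [binomCDF_eq_S m q1 x hx0 (le_of_lt hk_lt_m),
    binomCDF_eq_S n2 q2 x hx0 (le_of_lt hk_lt_n2)]
  have h1 : binomS m q1 k ≤ binomS m (lam / (m : ℝ)) k :=
    binomS_anti m k hk_lt_m (by positivity) hqstar_le_q1 hq1'
  have h2 : binomS m (lam / (m : ℝ)) k < binomS n2 (lam / (n2 : ℝ)) k :=
    binomS_chain k lam hlam0 hklam m hlam_le_m n2 hceil
  have h3 : lam / (n2 : ℝ) = q2 := by
    rw [hlam]
    field_simp
  rw [h3] at h2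
  linarith
end

section
/- Let n2 be a positive integer, p2 ∈ (0,1), q2 ∈ (0,1) and α ∈ (0,1). If 1 − F_{n2,q2}(F_{n2,p2}^{-1}(1−α)) ≥ 1/2 + sqrt(2/(e·n2·q2·(1−q2))), then F_{n2,p2}^{-1}(1−α) ≤ n2·q2 − 1. -/
open Finset intervalIntegral Real

lemma binomPMF_nonneg {n : ℕ} {p : ℝ} (h0 : 0 ≤ p) (h1 : p ≤ 1) (k : ℕ) :
    0 ≤ binomPMF n p k := by
  have h2 : 0 ≤ 1 - p := by linarith
  unfold binomPMF
  positivity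

lemma binomCDF_mono {n : ℕ} {p : ℝ} (h0 : 0 ≤ p) (h1 : p ≤ 1) {x y : ℝ} (hxy : x ≤ y) :
    binomCDF n p x ≤ binomCDF n p y := by
  apply Finset.sum_le_sum
  intro k _
  by_cases h : (k : ℝ) ≤ x
  · rw [if_pos h, if_pos (h.trans hxy)]
  · rw [if_neg h]
    split
    · exact binomPMF_nonneg h0 h1 k
    · exact le_refl 0

lemma binomCDF_neg {n : ℕ} {p : ℝ} {x : ℝ} (hx : x < 0) : binomCDF n p x = 0 := by
  apply Finset.sum_eq_zero
  intro k _
  rw [if_neg]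
  exact not_le.mpr (lt_of_lt_of_le hx (Nat.cast_nonneg k))

lemma sum_binomPMF (n : ℕ) (p : ℝ) : ∑ j ∈ Finset.range (n + 1), binomPMF n p j = 1 := by
  have h := add_pow p (1 - p) n
  simp only [add_sub_cancel, one_pow] at h
  rw [h]
  apply Finset.sum_congr rfl
  intro k _
  unfold binomPMF
  ring

lemma binomCDF_nat_eq {n : ℕ} {p : ℝ} {m : ℕ} (hm : n ≤ m) :
    binomCDF n p (m : ℝ) = 1 := by
  rw [← sum_binomPMF n p]
  apply Finset.sum_congr rfl
  intro k hk
  rw [if_pos]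
  exact_mod_cast Nat.le_of_lt_succ (Finset.mem_range.mp hk) |>.trans hm

lemma binomCDF_le_nat {n : ℕ} {p : ℝ} (h0 : 0 ≤ p) (h1 : p ≤ 1) {x : ℝ} {m : ℕ}
    (hx : x < (m : ℝ) + 1) : binomCDF n p x ≤ binomCDF n p (m : ℝ) := by
  apply Finset.sum_le_sum
  intro k _
  by_cases h : (k : ℝ) ≤ x
  · have : (k : ℝ) ≤ m := by
      have : (k : ℝ) < (m : ℝ) + 1 := lt_of_le_of_lt h hx
      exact_mod_cast Nat.lt_succ_iff.mp (by exact_mod_cast this)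
    rw [if_pos h, if_pos this]
  · rw [if_neg h]
    split
    · exact binomPMF_nonneg h0 h1 k
    · exact le_refl 0

lemma binomQuantile_eq_nat {n : ℕ} {p u : ℝ} (h0 : 0 ≤ p) (h1 : p ≤ 1)
    (hu0 : 0 < u) (hu1 : u ≤ 1) :
    ∃ k₀ : ℕ, binomQuantile n p u = (k₀ : ℝ) := by
  classical
  have hex : ∃ k : ℕ, u ≤ binomCDF n p (k : ℝ) := ⟨n, by rw [binomCDF_nat_eq le_rfl]; exact hu1⟩
  let k₀ := Nat.find hex
  refine ⟨k₀, ?_⟩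
  have hset : {x : ℝ | u ≤ binomCDF n p x} = Set.Ici (k₀ : ℝ) := by
    ext x
    simp only [Set.mem_setOf_eq, Set.mem_Ici]
    constructor
    · intro hx
      by_contra hlt
      push_neg at hlt
      have hx0 : 0 ≤ x := by
        by_contra hx0
        push_neg at hx0
        rw [binomCDF_neg hx0] at hx
        linarith
      have hk0 : k₀ ≠ 0 := by
        intro h
        rw [h] at hlt
        simp at hlt
        linarith
      obtain ⟨k₁, hk₁⟩ := Nat.exists_eq_succ_of_ne_zero hk0
      have hxle : binomCDF n p x ≤ binomCDF n p (k₁ : ℝ) := by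
        apply binomCDF_le_nat h0 h1
        rw [hk₁] at hlt
        push_cast at hlt ⊢
        linarith
      have := Nat.find_min hex (m := k₁) (by omega)
      push_neg at this
      linarith [hx.trans hxle]
    · intro hx
      exact le_trans (Nat.find_spec hex) (binomCDF_mono h0 h1 hx)
  unfold binomQuantile
  rw [hset, csInf_Ici]

lemma hasDerivAt_one_sub_pow (m : ℕ) (t : ℝ) :
    HasDerivAt (fun t : ℝ => (1 - t) ^ m) (-(m * (1 - t) ^ (m - 1))) t := by
  have h1 : HasDerivAt (fun t : ℝ => 1 - t) (-1) t := by
    simpa using (hasDerivAt_id t).const_sub 1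
  have := h1.pow m
  exact this.congr_deriv (by ring)

lemma cont_poly (a b : ℕ) : Continuous (fun t : ℝ => t ^ a * (1 - t) ^ b) := by
  continuity

lemma intInt (a b : ℕ) (x y : ℝ) :
    IntervalIntegrable (fun t : ℝ => t ^ a * (1 - t) ^ b) MeasureTheory.volume x y :=
  (cont_poly a b).intervalIntegrable x y

lemma int_parts (a b : ℕ) (q : ℝ) :
    (a + 1 : ℝ) * ∫ t in (0:ℝ)..q, t ^ a * (1 - t) ^ (b + 1)
      = q ^ (a + 1) * (1 - q) ^ (b + 1)
        + (b + 1 : ℝ) * ∫ t in (0:ℝ)..q, t ^ (a + 1) * (1 - t) ^ b := by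
  have hderiv : ∀ t ∈ Set.uIcc (0:ℝ) q,
      HasDerivAt (fun t : ℝ => t ^ (a + 1) * (1 - t) ^ (b + 1))
        ((a + 1 : ℝ) * (t ^ a * (1 - t) ^ (b + 1))
          - (b + 1 : ℝ) * (t ^ (a + 1) * (1 - t) ^ b)) t := by
    intro t _
    have h1 : HasDerivAt (fun t : ℝ => t ^ (a + 1)) ((a + 1 : ℝ) * t ^ a) t := by
      simpa using hasDerivAt_pow (a + 1) t
    have h2 := hasDerivAt_one_sub_pow (b + 1) t
    have := h1.mul h2
    simp only [Nat.add_sub_cancel] at this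
    refine this.congr_deriv ?_
    push_cast
    ring
  have hcont : IntervalIntegrable (fun t : ℝ =>
      (a + 1 : ℝ) * (t ^ a * (1 - t) ^ (b + 1)) - (b + 1 : ℝ) * (t ^ (a + 1) * (1 - t) ^ b))
      MeasureTheory.volume 0 q := by
    apply Continuous.intervalIntegrable
    continuity
  have hftc := integral_eq_sub_of_hasDerivAt hderiv hcont
  have hsplit : ∫ t in (0:ℝ)..q,
      ((a + 1 : ℝ) * (t ^ a * (1 - t) ^ (b + 1)) - (b + 1 : ℝ) * (t ^ (a + 1) * (1 - t) ^ b))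
      = (a + 1 : ℝ) * (∫ t in (0:ℝ)..q, t ^ a * (1 - t) ^ (b + 1))
        - (b + 1 : ℝ) * ∫ t in (0:ℝ)..q, t ^ (a + 1) * (1 - t) ^ b := by
    rw [intervalIntegral.integral_sub ((Continuous.intervalIntegrable (by continuity) _ _))
      ((Continuous.intervalIntegrable (by continuity) _ _)),
      intervalIntegral.integral_const_mul, intervalIntegral.integral_const_mul]
  rw [hsplit] at hftc
  have h0 : (0:ℝ) ^ (a+1) * (1 - 0) ^ (b+1) = 0 := by norm_num
  rw [h0] at hftc
  linarith [hftc]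

lemma cdf_rep (a b : ℕ) (q : ℝ) :
    ∑ j ∈ Finset.range (a + 1), binomPMF (a + b + 1) q j
      = 1 - ((a + b + 1 : ℕ) : ℝ) * ((a + b).choose a : ℝ)
          * ∫ t in (0:ℝ)..q, t ^ a * (1 - t) ^ b := by
  induction a generalizing b with
  | zero =>
      have hr : Finset.range (0 + 1) = {0} := rfl
      rw [hr, Finset.sum_singleton]
      have hderiv : ∀ t ∈ Set.uIcc (0:ℝ) q,
          HasDerivAt (fun t : ℝ => -(1 - t) ^ (b + 1)) (((b:ℝ) + 1) * (1 - t) ^ b) t := by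
        intro t _
        have := (hasDerivAt_one_sub_pow (b + 1) t).neg
        simp only [Nat.add_sub_cancel, neg_neg] at this
        refine this.congr_deriv ?_
        push_cast; ring
      have hftc := integral_eq_sub_of_hasDerivAt hderiv
        (by apply Continuous.intervalIntegrable; continuity)
      have hmul : ∫ t in (0:ℝ)..q, ((b:ℝ) + 1) * (1 - t) ^ b
          = ((b:ℝ) + 1) * ∫ t in (0:ℝ)..q, (1 - t) ^ b :=
        intervalIntegral.integral_const_mul _ _
      rw [hmul] at hftc
      norm_num at hftc
      unfold binomPMF
      simp only [Nat.zero_add, Nat.choose_zero_right, Nat.cast_one, pow_zero,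
        Nat.sub_zero, one_mul, Nat.choose_self]
      push_cast
      linarith [hftc]
  | succ a ih =>
      have harr : a + 1 + b + 1 = a + (b + 1) + 1 := by omega
      have hsum : ∑ j ∈ Finset.range (a + 1 + 1), binomPMF (a + 1 + b + 1) q j
          = (∑ j ∈ Finset.range (a + 1), binomPMF (a + (b + 1) + 1) q j)
            + binomPMF (a + 1 + b + 1) q (a + 1) := by
        rw [Finset.sum_range_succ, harr]
      rw [hsum, ih (b + 1)]
      have hparts := int_parts a b q
      have hc1 : ((a + (b + 1) + 1 : ℕ) : ℝ) * (((a + (b + 1)).choose a : ℕ) : ℝ)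
          = ((a + b + 2 : ℕ) : ℝ) * (((a + b + 1).choose a : ℕ) : ℝ) := by
        rw [show a + (b + 1) + 1 = a + b + 2 from by omega,
        show a + (b + 1) = a + b + 1 from by omega]
      have hn : a + 1 + b + 1 = a + b + 2 := by omega
      have hid1 : (a + b + 2) * ((a + b + 1).choose a) = (a + b + 2).choose (a + 1) * (a + 1) :=
        Nat.add_one_mul_choose_eq (a + b + 1) a
      have hid2 : (a + b + 1).choose (a + 1) * (a + 1) = (a + b + 1).choose a * (b + 1) := by
        have := Nat.choose_succ_right_eq (a + b + 1) a
        simpa [show a + b + 1 - a = b + 1 from by omega] using this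
      have hpmf : binomPMF (a + 1 + b + 1) q (a + 1)
          = ((a + b + 2).choose (a + 1) : ℝ) * (q ^ (a + 1) * (1 - q) ^ (b + 1)) := by
        unfold binomPMF
        rw [hn, show a + b + 2 - (a + 1) = b + 1 from by omega]
        ring
      rw [hpmf, hc1, show ((a+1) + b : ℕ) = a + b + 1 from by omega,
        show (a + b + 1 + 1 : ℕ) = a + b + 2 from by omega]
      have hr1 : ((a + b + 2 : ℕ) : ℝ) * (((a + b + 1).choose a : ℕ) : ℝ)
          = (((a + b + 2).choose (a + 1) : ℕ) : ℝ) * ((a : ℝ) + 1) := by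
        exact_mod_cast congrArg (Nat.cast : ℕ → ℝ) hid1
      have hr2 : (((a + b + 1).choose (a + 1) : ℕ) : ℝ) * ((a : ℝ) + 1)
          = (((a + b + 1).choose a : ℕ) : ℝ) * ((b : ℝ) + 1) := by
        exact_mod_cast congrArg (Nat.cast : ℕ → ℝ) hid2
      set C1 := (((a + b + 1).choose a : ℕ) : ℝ) with hC1
      set C2 := (((a + b + 1).choose (a + 1) : ℕ) : ℝ) with hC2
      set D := (((a + b + 2).choose (a + 1) : ℕ) : ℝ) with hD
      set I₁ := ∫ t in (0:ℝ)..q, t ^ a * (1 - t) ^ (b + 1) with hI₁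
      set I₂ := ∫ t in (0:ℝ)..q, t ^ (a + 1) * (1 - t) ^ b with hI₂
      have hApos : (0:ℝ) < (a : ℝ) + 1 := by positivity
      push_cast at hr1 hr2 hparts
      have hgoal : ((a:ℝ) + 1) * ((1 - ((a + b + 2 : ℕ) : ℝ) * C1 * I₁)
            + D * (q ^ (a + 1) * (1 - q) ^ (b + 1)))
          = ((a:ℝ) + 1) * (1 - ((a + b + 2 : ℕ) : ℝ) * C2 * I₂) := by
        push_cast
        linear_combination (-(((a:ℝ) + (b:ℝ) + 2) * C1)) * hparts
          - (q ^ (a + 1) * (1 - q) ^ (b + 1)) * hr1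
          + (((a:ℝ) + (b:ℝ) + 2) * I₂) * hr2
      exact mul_left_cancel₀ (ne_of_gt hApos) hgoal
lemma chi_ineq (N p x : ℝ) (hN : 0 < N) (hp0 : 0 < p) (hp1 : p < 1) :
    (2 * (p * N) + (1 - p) * N) * ((1 - x) * (x - p ^ 2))
      ≤ ((1 - p) * N) * (x * (x - p ^ 2) + x * (1 - x)) := by
  nlinarith [mul_nonneg (mul_nonneg hN.le (by linarith : (0:ℝ) ≤ 1 + p)) (sq_nonneg (x - p))]

/-- the central pointwise inequality -/
lemma claim_poly (m j : ℕ) (hm : 1 ≤ m) (hj : 1 ≤ j) (p : ℝ)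
    (hp : p * ((m : ℝ) + (j : ℝ)) = (m : ℝ)) (hp0 : 0 < p) (hp1 : p < 1) :
    ∀ u ∈ Set.Icc (p ^ 2) p, p ^ (2 * m) * (u - p ^ 2) ^ j ≤ u ^ (2 * m + j) * (1 - u) ^ j := by
  intro u hu
  obtain ⟨hu1, hu2⟩ := hu
  have hp2 : (0:ℝ) < p ^ 2 := by positivity
  have hu0 : 0 < u := lt_of_lt_of_le hp2 hu1
  have hu1' : u < 1 := lt_of_le_of_lt hu2 hp1
  rcases eq_or_lt_of_le hu1 with heq | hlt
  · rw [← heq]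
    have h0 : (p ^ 2 - p ^ 2 : ℝ) = 0 := by ring
    rw [h0, zero_pow (by omega : j ≠ 0), mul_zero]
    have h1 : (0:ℝ) < 1 - p ^ 2 := by nlinarith
    positivity
  · set Φ : ℝ → ℝ := fun x =>
      (2 * (m:ℝ) + (j:ℝ)) * Real.log x + (j:ℝ) * Real.log (1 - x)
        - (j:ℝ) * Real.log (x - p ^ 2) with hΦ
    have hderiv : ∀ x ∈ Set.Ioo u p,
        HasDerivAt Φ ((2 * (m:ℝ) + (j:ℝ)) / x - (j:ℝ) / (1 - x) - (j:ℝ) / (x - p ^ 2)) x := by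
      intro x hx
      have hx0 : 0 < x := lt_trans hu0 hx.1
      have hx1 : 0 < 1 - x := by have := hx.2; nlinarith
      have hxp : 0 < x - p ^ 2 := by have := hx.1; nlinarith
      have h1 : HasDerivAt (fun x : ℝ => Real.log x) x⁻¹ x := Real.hasDerivAt_log hx0.ne'
      have h2 : HasDerivAt (fun x : ℝ => Real.log (1 - x)) (-(1 - x)⁻¹) x := by
        have hin : HasDerivAt (fun x : ℝ => 1 - x) (-1) x := by
          simpa using (hasDerivAt_id x).const_sub 1
        have := (Real.hasDerivAt_log hx1.ne').comp x hin
        exact this.congr_deriv (by ring)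
      have h3 : HasDerivAt (fun x : ℝ => Real.log (x - p ^ 2)) ((x - p ^ 2)⁻¹) x := by
        have hin : HasDerivAt (fun x : ℝ => x - p ^ 2) 1 x := (hasDerivAt_id x).sub_const _
        have := (Real.hasDerivAt_log hxp.ne').comp x hin
        exact this.congr_deriv (by ring)
      have hsum := ((h1.const_mul (2 * (m:ℝ) + (j:ℝ))).add (h2.const_mul (j:ℝ))).sub
        (h3.const_mul (j:ℝ))
      refine hsum.congr_deriv ?_
      rw [div_eq_mul_inv, div_eq_mul_inv, div_eq_mul_inv]
      ring
    have hderiv_nonpos : ∀ x ∈ Set.Ioo u p,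
        (2 * (m:ℝ) + (j:ℝ)) / x - (j:ℝ) / (1 - x) - (j:ℝ) / (x - p ^ 2) ≤ 0 := by
      intro x hx
      have hx0 : 0 < x := lt_trans hu0 hx.1
      have hx1 : 0 < 1 - x := by have := hx.2; nlinarith
      have hxp : 0 < x - p ^ 2 := by have := hx.1; nlinarith
      have hN : (0:ℝ) < (m:ℝ) + (j:ℝ) := by
        have h1 : (1:ℝ) ≤ (m:ℝ) := by exact_mod_cast hm
        have h2 : (1:ℝ) ≤ (j:ℝ) := by exact_mod_cast hj
        linarith
      have hchi := chi_ineq ((m:ℝ) + (j:ℝ)) p x hN hp0 hp1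
      rw [hp] at hchi
      have hJ : (1 - p) * ((m:ℝ) + (j:ℝ)) = (j:ℝ) := by nlinarith [hp]
      rw [hJ] at hchi
      have hden : (0:ℝ) < x * ((1 - x) * (x - p ^ 2)) := by positivity
      rw [sub_sub, sub_nonpos]
      have e1 : (2 * (m:ℝ) + (j:ℝ)) / x
          = ((2 * (m:ℝ) + (j:ℝ)) * ((1 - x) * (x - p ^ 2))) / (x * ((1 - x) * (x - p ^ 2))) := by
        rw [mul_div_mul_right _ _ (by positivity : ((1 - x) * (x - p ^ 2)) ≠ 0)]
      have e2 : (j:ℝ) / (1 - x) + (j:ℝ) / (x - p ^ 2)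
          = ((j:ℝ) * (x * (x - p ^ 2) + x * (1 - x))) / (x * ((1 - x) * (x - p ^ 2))) := by
        field_simp
      rw [e1, e2]
      exact div_le_div_of_nonneg_right hchi hden.le
    have hcont : ContinuousOn Φ (Set.Icc u p) := by
      apply ContinuousOn.sub
      · apply ContinuousOn.add
        · apply continuousOn_const.mul
          apply ContinuousOn.log continuousOn_id
          intro x hx
          have : 0 < x := lt_of_lt_of_le hu0 hx.1
          exact this.ne'
        · apply continuousOn_const.mul
          apply ContinuousOn.log (continuousOn_const.sub continuousOn_id)
          intro x hx
          have : 0 < 1 - x := by have := hx.2; nlinarith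
          exact this.ne'
      · apply continuousOn_const.mul
        apply ContinuousOn.log (continuousOn_id.sub continuousOn_const)
        intro x hx
        have : 0 < x - p ^ 2 := by have := hx.1; nlinarith
        exact this.ne'
    have hanti : AntitoneOn Φ (Set.Icc u p) := by
      apply antitoneOn_of_deriv_nonpos (convex_Icc u p) hcont
      · intro x hx
        rw [interior_Icc] at hx
        exact (hderiv x hx).differentiableAt.differentiableWithinAt
      · intro x hx
        rw [interior_Icc] at hx
        rw [(hderiv x hx).deriv]
        exact hderiv_nonpos x hx
    have hmono : Φ p ≤ Φ u :=
      hanti (Set.mem_Icc.mpr ⟨le_refl u, hu2⟩) (Set.mem_Icc.mpr ⟨hu2, le_refl p⟩) hu2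
    have hPp : Φ p = 2 * (m:ℝ) * Real.log p := by
      rw [hΦ]
      simp only
      rw [show p - p ^ 2 = p * (1 - p) by ring,
        Real.log_mul hp0.ne' (by linarith : (1:ℝ) - p ≠ 0)]
      ring
    have hlogs : Real.log (p ^ (2 * m) * (u - p ^ 2) ^ j)
        ≤ Real.log (u ^ (2 * m + j) * (1 - u) ^ j) := by
      rw [Real.log_mul (by positivity) (pow_ne_zero _ (ne_of_gt (by linarith : (0:ℝ) < u - p ^ 2))),
        Real.log_mul (by positivity) (pow_ne_zero _ (ne_of_gt (by linarith : (0:ℝ) < 1 - u))),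
        Real.log_pow, Real.log_pow, Real.log_pow, Real.log_pow]
      have := hmono
      rw [hPp, hΦ] at this
      simp only at this
      push_cast
      linarith
    exact (Real.log_le_log_iff
      (mul_pos (by positivity) (pow_pos (by linarith) j))
      (mul_pos (by positivity) (pow_pos (by linarith) j))).mp hlogs

lemma key_int (a j : ℕ) (hj : 1 ≤ j) (p : ℝ)
    (hp : p = ((a:ℝ) + 1) / ((a:ℝ) + (j:ℝ) + 1)) :
    ∫ t in p..1, t ^ a * (1 - t) ^ j ≤ ∫ t in (0:ℝ)..p, t ^ a * (1 - t) ^ j := by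
  have hj1 : (1:ℝ) ≤ (j:ℝ) := by exact_mod_cast hj
  have hden : (0:ℝ) < (a:ℝ) + (j:ℝ) + 1 := by positivity
  have hp0 : 0 < p := by rw [hp]; positivity
  have hp1 : p < 1 := by
    rw [hp, div_lt_one hden]
    linarith
  have hple : p ^ 2 ≤ p := by nlinarith
  have hpm : p * (((a:ℕ) + 1 : ℕ) + (j:ℝ)) = ((a:ℕ) + 1 : ℕ) := by
    push_cast
    rw [hp]
    field_simp
    ring
  -- substitution x ↦ p^2/x
  have hderivf : ∀ x ∈ Set.uIcc (p ^ 2) p,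
      HasDerivAt (fun x : ℝ => p ^ 2 / x) (-(p ^ 2 / x ^ 2)) x := by
    intro x hx
    rw [Set.uIcc_of_le hple] at hx
    have hx0 : 0 < x := lt_of_lt_of_le (by positivity) hx.1
    have := (hasDerivAt_inv hx0.ne').const_mul (p ^ 2)
    refine this.congr_deriv ?_
    rw [div_eq_mul_inv]
    ring
  have hcontf' : ContinuousOn (fun x : ℝ => -(p ^ 2 / x ^ 2)) (Set.uIcc (p ^ 2) p) := by
    rw [Set.uIcc_of_le hple]
    apply ContinuousOn.neg
    apply ContinuousOn.div continuousOn_const (by fun_prop)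
    intro x hx
    have hx0 : 0 < x := lt_of_lt_of_le (by positivity) hx.1
    positivity
  have hsub := intervalIntegral.integral_comp_smul_deriv hderivf hcontf' (cont_poly a j)
  simp only [Function.comp, smul_eq_mul] at hsub
  have hq1 : p ^ 2 / p ^ 2 = 1 := div_self (by positivity)
  have hq2 : p ^ 2 / p = p := by field_simp
  rw [hq1, hq2] at hsub
  -- hsub : ∫ x in p^2..p, -(p^2/x^2) * ((p^2/x)^a * (1-p^2/x)^j) = ∫ t in 1..p, t^a(1-t)^j
  have hneg : ∫ x in (p^2)..p, -(p ^ 2 / x ^ 2) * ((p ^ 2 / x) ^ a * (1 - p ^ 2 / x) ^ j)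
      = -∫ x in (p^2)..p, (p ^ 2 / x ^ 2) * ((p ^ 2 / x) ^ a * (1 - p ^ 2 / x) ^ j) := by
    rw [← intervalIntegral.integral_neg]
    apply intervalIntegral.integral_congr
    intro x _
    ring
  rw [hneg] at hsub
  have hswap : ∫ t in p..1, t ^ a * (1 - t) ^ j
      = ∫ x in (p^2)..p, (p ^ 2 / x ^ 2) * ((p ^ 2 / x) ^ a * (1 - p ^ 2 / x) ^ j) := by
    rw [intervalIntegral.integral_symm 1 p, ← hsub, neg_neg]
  -- pointwise comparison
  have hcontL : ContinuousOn (fun x : ℝ => (p ^ 2 / x ^ 2) * ((p ^ 2 / x) ^ a * (1 - p ^ 2 / x) ^ j))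
      (Set.Icc (p ^ 2) p) := by
    have h2 : ∀ x ∈ Set.Icc (p ^ 2) p, x ≠ 0 := by
      intro x hx
      have : 0 < x := lt_of_lt_of_le (by positivity) hx.1
      exact this.ne'
    apply ContinuousOn.mul
    · exact ContinuousOn.div continuousOn_const (by fun_prop)
        (fun x hx => pow_ne_zero 2 (h2 x hx))
    · apply ContinuousOn.mul
      · exact ContinuousOn.pow (ContinuousOn.div continuousOn_const continuousOn_id h2) a
      · exact ContinuousOn.pow (continuousOn_const.sub
          (ContinuousOn.div continuousOn_const continuousOn_id h2)) j
  have hpoint : ∀ x ∈ Set.Icc (p ^ 2) p,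
      (p ^ 2 / x ^ 2) * ((p ^ 2 / x) ^ a * (1 - p ^ 2 / x) ^ j) ≤ x ^ a * (1 - x) ^ j := by
    intro x hx
    have hx0 : 0 < x := lt_of_lt_of_le (by positivity) hx.1
    have hclaim := claim_poly (a + 1) j (by omega) hj p hpm hp0 hp1 x hx
    have hxp : (0:ℝ) < x ^ 2 * x ^ a * x ^ j := by positivity
    have h1x : (1 - p ^ 2 / x) = (x - p ^ 2) / x := by field_simp
    have key2 := div_le_div_of_nonneg_right hclaim hxp.le
    have eL : p ^ (2 * (a + 1)) * (x - p ^ 2) ^ j / (x ^ 2 * x ^ a * x ^ j)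
        = (p ^ 2 / x ^ 2) * ((p ^ 2 / x) ^ a * (1 - p ^ 2 / x) ^ j) := by
      rw [h1x, div_pow, div_pow]
      field_simp
      ring
    have eR : x ^ (2 * (a + 1) + j) * (1 - x) ^ j / (x ^ 2 * x ^ a * x ^ j)
        = x ^ a * (1 - x) ^ j := by
      field_simp
      ring
    rw [eL, eR] at key2
    exact key2
  have hcontL' : ContinuousOn
      (fun x : ℝ => (p ^ 2 / x ^ 2) * ((p ^ 2 / x) ^ a * (1 - p ^ 2 / x) ^ j))
      (Set.uIcc (p ^ 2) p) := by
    rw [Set.uIcc_of_le hple]; exact hcontL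
  have hmono := intervalIntegral.integral_mono_on hple
    hcontL'.intervalIntegrable (intInt a j _ _) hpoint
  rw [← hswap] at hmono
  -- now ∫ p..1 ≤ ∫ p^2..p ≤ ∫ 0..p
  have hsplit := intervalIntegral.integral_add_adjacent_intervals
    (intInt a j 0 (p ^ 2)) (intInt a j (p ^ 2) p)
  have hnn : 0 ≤ ∫ t in (0:ℝ)..(p ^ 2), t ^ a * (1 - t) ^ j := by
    apply intervalIntegral.integral_nonneg (by positivity)
    intro t ht
    have h1 : 0 ≤ t := ht.1
    have h2 : t ≤ 1 := le_trans ht.2 (by nlinarith)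
    have : 0 ≤ 1 - t := by linarith
    positivity
  linarith

lemma median_sum (k b : ℕ) (q : ℝ) (hq0 : 0 < q) (hq1 : q < 1) (hk : 1 ≤ k)
    (hq : q * ((k:ℝ) + (b:ℝ) + 1) ≤ (k:ℝ)) :
    1 / 2 ≤ ∑ j ∈ Finset.range (k + 1), binomPMF (k + b + 1) q j := by
  have hrep := cdf_rep k b q
  have hrep1 := cdf_rep k b 1
  have hzero : ∑ j ∈ Finset.range (k + 1), binomPMF (k + b + 1) 1 j = 0 := by
    apply Finset.sum_eq_zero
    intro j hj
    unfold binomPMF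
    rw [show (1:ℝ) - 1 = 0 from by ring, zero_pow, mul_zero]
    have := Finset.mem_range.mp hj
    omega
  rw [hzero] at hrep1
  set R := ((k + b + 1 : ℕ) : ℝ) * ((k + b).choose k : ℝ) with hR
  have hRnn : 0 ≤ R := by positivity
  have hTot : R * ∫ t in (0:ℝ)..1, t ^ k * (1 - t) ^ b = 1 := by linarith [hrep1]
  set P := (k : ℝ) / ((k:ℝ) + (b:ℝ) + 1) with hP
  have hden : (0:ℝ) < (k:ℝ) + (b:ℝ) + 1 := by positivity
  have hk1 : (1:ℝ) ≤ (k:ℝ) := by exact_mod_cast hk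
  have hP0 : 0 < P := by rw [hP]; positivity
  have hP1 : P < 1 := by rw [hP, div_lt_one hden]; linarith
  have hqP : q ≤ P := by
    rw [hP, le_div_iff₀ hden]
    linarith
  -- ∫_0^q ≤ ∫_0^P
  have h1 : ∫ t in (0:ℝ)..q, t ^ k * (1 - t) ^ b ≤ ∫ t in (0:ℝ)..P, t ^ k * (1 - t) ^ b := by
    have hadd := intervalIntegral.integral_add_adjacent_intervals
      (intInt k b 0 q) (intInt k b q P)
    have hnn : 0 ≤ ∫ t in q..P, t ^ k * (1 - t) ^ b := by
      apply intervalIntegral.integral_nonneg hqP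
      intro t ht
      have h1 : 0 ≤ t := le_trans hq0.le ht.1
      have h2 : t ≤ 1 := le_trans ht.2 hP1.le
      have : 0 ≤ 1 - t := by linarith
      positivity
    linarith
  -- reflection + key_int : ∫_0^P ≤ ∫_P^1
  have h2 : ∫ t in (0:ℝ)..P, t ^ k * (1 - t) ^ b ≤ ∫ t in P..1, t ^ k * (1 - t) ^ b := by
    set p := ((b:ℝ) + 1) / ((b:ℝ) + (k:ℝ) + 1) with hp
    have hkey := key_int b k hk p (by rw [hp])
    have hp1P : p = 1 - P := by
      rw [hp, hP]
      field_simp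
      ring
    have hrefl1 : ∫ t in (0:ℝ)..P, t ^ k * (1 - t) ^ b
        = ∫ x in p..1, x ^ b * (1 - x) ^ k := by
      have hc : ∫ t in (0:ℝ)..P, t ^ k * (1 - t) ^ b
          = ∫ t in (0:ℝ)..P, (fun x => x ^ b * (1 - x) ^ k) (1 - t) := by
        apply intervalIntegral.integral_congr
        intro t _
        simp only
        ring
      rw [hc, intervalIntegral.integral_comp_sub_left (fun x => x ^ b * (1 - x) ^ k) 1]
      rw [hp1P]
      norm_num
    have hrefl2 : ∫ t in P..1, t ^ k * (1 - t) ^ b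
        = ∫ x in (0:ℝ)..p, x ^ b * (1 - x) ^ k := by
      have hc : ∫ t in P..1, t ^ k * (1 - t) ^ b
          = ∫ t in P..1, (fun x => x ^ b * (1 - x) ^ k) (1 - t) := by
        apply intervalIntegral.integral_congr
        intro t _
        simp only
        ring
      rw [hc, intervalIntegral.integral_comp_sub_left (fun x => x ^ b * (1 - x) ^ k) 1]
      rw [hp1P]
      norm_num
    rw [hrefl1, hrefl2]
    exact hkey
  -- combine
  have hsplit := intervalIntegral.integral_add_adjacent_intervals
    (intInt k b 0 P) (intInt k b P 1)
  have hhalf : ∫ t in (0:ℝ)..q, t ^ k * (1 - t) ^ b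
      ≤ (∫ t in (0:ℝ)..1, t ^ k * (1 - t) ^ b) / 2 := by
    linarith
  rw [hrep]
  have hfin : R * ∫ t in (0:ℝ)..q, t ^ k * (1 - t) ^ b ≤ 1 / 2 := by
    calc R * ∫ t in (0:ℝ)..q, t ^ k * (1 - t) ^ b
        ≤ R * ((∫ t in (0:ℝ)..1, t ^ k * (1 - t) ^ b) / 2) := by
          apply mul_le_mul_of_nonneg_left hhalf hRnn
      _ = (R * ∫ t in (0:ℝ)..1, t ^ k * (1 - t) ^ b) / 2 := by ring
      _ = 1 / 2 := by rw [hTot]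
  linarith

lemma stirling_le (n : ℕ) (hn : 1 ≤ n) :
    Stirling.stirlingSeq n ≤ Real.exp 1 / Real.sqrt 2 := by
  have h1 : Stirling.stirlingSeq 1 = Real.exp 1 / Real.sqrt 2 := by
    unfold Stirling.stirlingSeq
    simp
    rw [div_eq_mul_inv]
  have h2 := Stirling.stirlingSeq'_antitone (Nat.zero_le (n - 1))
  simp only [Function.comp] at h2
  rw [show (n - 1).succ = n from by omega, show (0:ℕ).succ = 1 from rfl, h1] at h2
  exact h2

lemma stirling_ge (n : ℕ) (hn : 1 ≤ n) : Real.sqrt Real.pi ≤ Stirling.stirlingSeq n := by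
  have htend : Filter.Tendsto (Stirling.stirlingSeq ∘ Nat.succ) Filter.atTop
      (nhds (Real.sqrt Real.pi)) := by
    apply Stirling.tendsto_stirlingSeq_sqrt_pi.comp
    exact Filter.tendsto_add_atTop_nat 1
  have h2 := Stirling.stirlingSeq'_antitone.le_of_tendsto htend (n - 1)
  simp only [Function.comp] at h2
  rw [show (n - 1).succ = n from by omega] at h2
  exact h2

lemma sqrt2n_pos (n : ℕ) (hn : 1 ≤ n) :
    0 < Real.sqrt (2 * n) * ((n : ℝ) / Real.exp 1) ^ n := by
  have hn0 : (0:ℝ) < n := by exact_mod_cast hn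
  have h1 : (0:ℝ) < 2 * n := by linarith
  have : (0:ℝ) < (n : ℝ) / Real.exp 1 := div_pos hn0 (Real.exp_pos 1)
  positivity

lemma fact_upper (n : ℕ) (hn : 1 ≤ n) :
    (n.factorial : ℝ) ≤ (Real.exp 1 / Real.sqrt 2)
      * (Real.sqrt (2 * n) * ((n : ℝ) / Real.exp 1) ^ n) := by
  have hpos := sqrt2n_pos n hn
  have h := stirling_le n hn
  unfold Stirling.stirlingSeq at h
  rw [div_le_iff₀ hpos] at h
  linarith [h]

lemma fact_lower (n : ℕ) (hn : 1 ≤ n) :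
    Real.sqrt Real.pi * (Real.sqrt (2 * n) * ((n : ℝ) / Real.exp 1) ^ n)
      ≤ (n.factorial : ℝ) := by
  have hpos := sqrt2n_pos n hn
  have h := stirling_ge n hn
  unfold Stirling.stirlingSeq at h
  rw [le_div_iff₀ hpos] at h
  linarith [h]

lemma ratio_pow_le_exp (c d : ℝ) (k : ℕ) (hc : 0 ≤ c) (hd : 0 < d) :
    (c / d) ^ k ≤ Real.exp ((k : ℝ) * (c / d - 1)) := by
  have h1 : c / d ≤ Real.exp (c / d - 1) := by
    have := Real.add_one_le_exp (c / d - 1)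
    linarith
  calc (c / d) ^ k ≤ (Real.exp (c / d - 1)) ^ k := by
        apply pow_le_pow_left₀ (by positivity) h1
    _ = Real.exp ((k : ℝ) * (c / d - 1)) := by rw [Real.exp_nat_mul]

/-- the factor `q^k (1-q)^(n-k)` is maximized at `q = k/n` -/
lemma q_pow_le (n k m : ℕ) (q : ℝ) (hq0 : 0 < q) (hq1 : q < 1)
    (hk : 1 ≤ k) (hm : 1 ≤ m) (hn : n = k + m) :
    q ^ k * (1 - q) ^ m ≤ ((k : ℝ) / n) ^ k * ((m : ℝ) / n) ^ m := by
  have hk0 : (0:ℝ) < k := by exact_mod_cast hk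
  have hm0 : (0:ℝ) < m := by exact_mod_cast hm
  have hn0 : (0:ℝ) < n := by rw [hn]; push_cast; linarith
  have h1 : q ^ k = ((k : ℝ) / n) ^ k * (((n:ℝ) * q) / k) ^ k := by
    rw [← mul_pow]
    congr 1
    field_simp
  have h2 : (1 - q) ^ m = ((m : ℝ) / n) ^ m * (((n:ℝ) * (1 - q)) / m) ^ m := by
    rw [← mul_pow]
    congr 1
    field_simp
  rw [h1, h2]
  have e1 : (((n:ℝ) * q) / k) ^ k ≤ Real.exp ((k:ℝ) * (((n:ℝ) * q) / k - 1)) :=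
    ratio_pow_le_exp _ _ k (by positivity) hk0
  have e2 : (((n:ℝ) * (1 - q)) / m) ^ m ≤ Real.exp ((m:ℝ) * (((n:ℝ) * (1 - q)) / m - 1)) :=
    ratio_pow_le_exp _ _ m (by nlinarith) hm0
  have hprod : (((n:ℝ) * q) / k) ^ k * (((n:ℝ) * (1 - q)) / m) ^ m ≤ 1 := by
    have hnn2 : (0:ℝ) ≤ ((n:ℝ) * (1 - q)) / m := by
      apply div_nonneg _ hm0.le
      nlinarith
    have hmul := mul_le_mul e1 e2 (pow_nonneg hnn2 m) (Real.exp_pos _).le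
    rw [← Real.exp_add] at hmul
    have harg : (k:ℝ) * (((n:ℝ) * q) / k - 1) + (m:ℝ) * (((n:ℝ) * (1 - q)) / m - 1) = 0 := by
      field_simp
      have : (n:ℝ) = (k:ℝ) + (m:ℝ) := by rw [hn]; push_cast; ring
      nlinarith [this]
    rw [harg, Real.exp_zero] at hmul
    exact hmul
  calc ((k:ℝ)/n) ^ k * ((((n:ℝ) * q) / k) ^ k) * (((m:ℝ)/n) ^ m * ((((n:ℝ) * (1-q)) / m) ^ m))
      = (((k:ℝ)/n) ^ k * ((m:ℝ)/n) ^ m) * ((((n:ℝ) * q) / k) ^ k * (((n:ℝ)*(1-q))/m) ^ m) := by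
        ring
    _ ≤ (((k:ℝ)/n) ^ k * ((m:ℝ)/n) ^ m) * 1 := by
        apply mul_le_mul_of_nonneg_left hprod (by positivity)
    _ = ((k:ℝ)/n) ^ k * ((m:ℝ)/n) ^ m := by ring

lemma pmf_bound (n k : ℕ) (hk1 : 1 ≤ k) (hkn : k + 1 ≤ n) (q : ℝ)
    (hq0 : 0 < q) (hq1 : q < 1) :
    binomPMF n q k ≤ (Real.exp 1 / (2 * Real.pi))
      * (Real.sqrt (n : ℝ) / (Real.sqrt (k : ℝ) * Real.sqrt ((n : ℝ) - (k : ℝ)))) := by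
  set m := n - k with hm
  have hnkm : n = k + m := by omega
  have hm1 : 1 ≤ m := by omega
  have hk0 : (0:ℝ) < k := by exact_mod_cast hk1
  have hm0 : (0:ℝ) < m := by exact_mod_cast hm1
  have hn0 : (0:ℝ) < n := by exact_mod_cast (by omega : 0 < n)
  set N := (n : ℝ) with hN
  set K := (k : ℝ) with hK
  set M := (m : ℝ) with hM
  have hNKM : N = K + M := by rw [hN, hK, hM, hnkm]; push_cast; ring
  have he : (0:ℝ) < Real.exp 1 := Real.exp_pos 1
  -- factorial identity
  have hfac : ((n.choose k : ℕ) : ℝ) * ((k.factorial : ℕ) : ℝ) * ((m.factorial : ℕ) : ℝ)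
      = ((n.factorial : ℕ) : ℝ) := by
    have := Nat.choose_mul_factorial_mul_factorial (by omega : k ≤ n)
    rw [← hm] at this
    exact_mod_cast congrArg (Nat.cast : ℕ → ℝ) this
  have hfk : (0:ℝ) < ((k.factorial : ℕ) : ℝ) := by exact_mod_cast k.factorial_pos
  have hfm : (0:ℝ) < ((m.factorial : ℕ) : ℝ) := by exact_mod_cast m.factorial_pos
  have hfn : (0:ℝ) < ((n.factorial : ℕ) : ℝ) := by exact_mod_cast n.factorial_pos
  have hq_le := q_pow_le n k m q hq0 hq1 hk1 hm1 hnkm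
  -- step 1 : pmf * (k! * m!) ≤ n! * ((K/N)^k * (M/N)^m)
  have step1 : binomPMF n q k * (((k.factorial : ℕ) : ℝ) * ((m.factorial : ℕ) : ℝ))
      ≤ ((n.factorial : ℕ) : ℝ) * ((K / N) ^ k * (M / N) ^ m) := by
    unfold binomPMF
    rw [← hm]
    calc ((n.choose k : ℕ) : ℝ) * q ^ k * (1 - q) ^ m
          * (((k.factorial : ℕ) : ℝ) * ((m.factorial : ℕ) : ℝ))
        = (((n.choose k : ℕ) : ℝ) * ((k.factorial : ℕ) : ℝ) * ((m.factorial : ℕ) : ℝ))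
          * (q ^ k * (1 - q) ^ m) := by ring
      _ = ((n.factorial : ℕ) : ℝ) * (q ^ k * (1 - q) ^ m) := by rw [hfac]
      _ ≤ ((n.factorial : ℕ) : ℝ) * ((K / N) ^ k * (M / N) ^ m) := by
          apply mul_le_mul_of_nonneg_left hq_le hfn.le
  -- Stirling bounds
  set U := (Real.exp 1 / Real.sqrt 2) * (Real.sqrt (2 * N) * (N / Real.exp 1) ^ n) with hU
  set Lk := Real.sqrt Real.pi * (Real.sqrt (2 * K) * (K / Real.exp 1) ^ k) with hLk
  set Lm := Real.sqrt Real.pi * (Real.sqrt (2 * M) * (M / Real.exp 1) ^ m) with hLm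
  have hLkpos : 0 < Lk := by
    rw [hLk]
    have h1 : (0:ℝ) < 2 * K := by linarith
    have h2 : (0:ℝ) < K / Real.exp 1 := by positivity
    have := Real.pi_pos
    positivity
  have hLmpos : 0 < Lm := by
    rw [hLm]
    have h1 : (0:ℝ) < 2 * M := by linarith
    have h2 : (0:ℝ) < M / Real.exp 1 := by positivity
    have := Real.pi_pos
    positivity
  have hULk := fact_lower k hk1
  have hULm := fact_lower m hm1
  have hUn := fact_upper n (by omega)
  -- step 2 : pmf ≤ U * ((K/N)^k * (M/N)^m) / (Lk * Lm)
  have hKNpow : (0:ℝ) ≤ (K / N) ^ k * (M / N) ^ m := by positivity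
  have step2 : binomPMF n q k ≤ U * ((K / N) ^ k * (M / N) ^ m) / (Lk * Lm) := by
    have hpmf_nonneg : 0 ≤ binomPMF n q k := by
      unfold binomPMF
      have h1 : (0:ℝ) ≤ 1 - q := by linarith
      positivity
    have h1 : binomPMF n q k ≤ ((n.factorial : ℕ) : ℝ) * ((K / N) ^ k * (M / N) ^ m)
        / (((k.factorial : ℕ) : ℝ) * ((m.factorial : ℕ) : ℝ)) := by
      rw [le_div_iff₀ (by positivity)]
      linarith [step1]
    calc binomPMF n q k
        ≤ ((n.factorial : ℕ) : ℝ) * ((K / N) ^ k * (M / N) ^ m)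
          / (((k.factorial : ℕ) : ℝ) * ((m.factorial : ℕ) : ℝ)) := h1
      _ ≤ U * ((K / N) ^ k * (M / N) ^ m) / (Lk * Lm) := by
          apply div_le_div₀ (by positivity)
          · apply mul_le_mul_of_nonneg_right _ hKNpow
            rw [hU, hN]
            push_cast
            exact hUn
          · exact mul_pos hLkpos hLmpos
          · apply mul_le_mul
            · rw [hLk, hK]; push_cast; exact hULk
            · rw [hLm, hM]; push_cast; exact hULm
            · exact hLmpos.le
            · exact hfk.le
  -- power cancellation
  have hpow : (N / Real.exp 1) ^ n * ((K / N) ^ k * (M / N) ^ m)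
      = (K / Real.exp 1) ^ k * (M / Real.exp 1) ^ m := by
    rw [hnkm, pow_add]
    rw [show (N / Real.exp 1) ^ k * (N / Real.exp 1) ^ m * ((K / N) ^ k * (M / N) ^ m)
      = ((N / Real.exp 1) * (K / N)) ^ k * ((N / Real.exp 1) * (M / N)) ^ m from by
        rw [mul_pow, mul_pow]; ring]
    congr 2
    · field_simp
    · field_simp
  -- final equality
  set P := (K / Real.exp 1) ^ k * (M / Real.exp 1) ^ m with hP
  have hPpos : 0 < P := by
    rw [hP]
    have h1 : (0:ℝ) < K / Real.exp 1 := by positivity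
    have h2 : (0:ℝ) < M / Real.exp 1 := by positivity
    positivity
  have h2 : Real.sqrt 2 * Real.sqrt 2 = 2 := Real.mul_self_sqrt (by norm_num)
  have hpi : Real.sqrt Real.pi * Real.sqrt Real.pi = Real.pi :=
    Real.mul_self_sqrt Real.pi_pos.le
  have hs2 : (0:ℝ) < Real.sqrt 2 := Real.sqrt_pos.mpr (by norm_num)
  have hspi : (0:ℝ) < Real.sqrt Real.pi := Real.sqrt_pos.mpr Real.pi_pos
  have hsK : (0:ℝ) < Real.sqrt K := Real.sqrt_pos.mpr hk0
  have hsM : (0:ℝ) < Real.sqrt M := Real.sqrt_pos.mpr hm0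
  have heq : U * ((K / N) ^ k * (M / N) ^ m) / (Lk * Lm)
      = (Real.exp 1 / (2 * Real.pi)) * (Real.sqrt N / (Real.sqrt K * Real.sqrt M)) := by
    have hnum : U * ((K / N) ^ k * (M / N) ^ m) = (Real.exp 1 * Real.sqrt N) * P := by
      rw [hU, show Real.exp 1 / Real.sqrt 2 * (Real.sqrt (2 * N) * (N / Real.exp 1) ^ n)
          * ((K / N) ^ k * (M / N) ^ m)
        = Real.exp 1 / Real.sqrt 2 * Real.sqrt (2 * N)
          * ((N / Real.exp 1) ^ n * ((K / N) ^ k * (M / N) ^ m)) from by ring, hpow]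
      rw [Real.sqrt_mul (by norm_num : (0:ℝ) ≤ 2) N]
      rw [show Real.exp 1 / Real.sqrt 2 * (Real.sqrt 2 * Real.sqrt N) * P
        = (Real.exp 1 / Real.sqrt 2 * Real.sqrt 2) * (Real.sqrt N * P) from by ring,
        div_mul_cancel₀ _ hs2.ne']
      ring
    have hden : Lk * Lm = ((2 * Real.pi) * (Real.sqrt K * Real.sqrt M)) * P := by
      rw [hLk, hLm, hP,
        Real.sqrt_mul (by norm_num : (0:ℝ) ≤ 2) K,
        Real.sqrt_mul (by norm_num : (0:ℝ) ≤ 2) M]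
      rw [show Real.sqrt Real.pi * (Real.sqrt 2 * Real.sqrt K * (K / Real.exp 1) ^ k)
          * (Real.sqrt Real.pi * (Real.sqrt 2 * Real.sqrt M * (M / Real.exp 1) ^ m))
        = (Real.sqrt Real.pi * Real.sqrt Real.pi) * ((Real.sqrt 2 * Real.sqrt 2)
          * ((Real.sqrt K * Real.sqrt M) * ((K / Real.exp 1) ^ k * (M / Real.exp 1) ^ m)))
        from by ring, hpi, h2]
      ring
    rw [hnum, hden, mul_div_mul_right _ _ hPpos.ne', div_mul_div_comm]
  rw [heq] at step2
  have hNKM2 : N - K = M := by rw [hNKM]; ring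
  rw [hNKM2]
  exact step2

set_option maxHeartbeats 1000000 in
lemma pmf_lt_delta (n k : ℕ) (q : ℝ) (hq0 : 0 < q) (hq1 : q < 1) (hk1 : 1 ≤ k)
    (hkn : k + 1 ≤ n)
    (hnqk : (n:ℝ) * q ≤ (k:ℝ)) (hkq : (k:ℝ) < (n:ℝ) * q + 1)
    (hs : 8 ≤ Real.exp 1 * ((n:ℝ) * q * (1 - q))) :
    binomPMF n q k < Real.sqrt (2 / (Real.exp 1 * n * q * (1 - q))) := by
  have he1 : Real.exp 1 < 2.72 := lt_trans Real.exp_one_lt_d9 (by norm_num)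
  have he0 : (2.71:ℝ) < Real.exp 1 := lt_trans (by norm_num) Real.exp_one_gt_d9
  have hπ1 : (3.14:ℝ) < Real.pi := lt_trans (by norm_num) Real.pi_gt_d6
  have hπ2 : Real.pi < 3.15 := Real.pi_lt_d2
  have hπ0 : 0 < Real.pi := Real.pi_pos
  have hepos : 0 < Real.exp 1 := Real.exp_pos 1
  set N := (n : ℝ) with hN
  set K := (k : ℝ) with hK
  have hN0 : 0 < N := by
    rw [hN]; exact_mod_cast (by omega : 0 < n)
  have hK0 : 0 < K := by
    rw [hK]; exact_mod_cast hk1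
  have hKN : K < N := by
    rw [hK, hN]; exact_mod_cast (by omega : k < n)
  set R := N - K with hR
  have hR0 : 0 < R := by rw [hR]; linarith
  have h1q : 0 < 1 - q := by linarith
  have hv : 0 < N * q := by positivity
  set w := N * (1 - q) with hw
  have hw0 : 0 < w := by rw [hw]; positivity
  have hsw : N * q * (1 - q) ≤ w := by
    rw [hw]
    nlinarith
  have hw8 : 8 ≤ Real.exp 1 * w :=
    le_trans hs (by nlinarith)
  have hw1 : 1 < w - 1 + 1 := by nlinarith
  have hRgt : w - 1 < R := by
    rw [hR, hw]
    nlinarith [hkq]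
  have hw1pos : 0 < w - 1 := by nlinarith
  have hKRlt : N * q * (w - 1) < K * R := by
    calc N * q * (w - 1) < N * q * R := by
          exact mul_lt_mul_of_pos_left hRgt hv
      _ ≤ K * R := mul_le_mul_of_nonneg_right hnqk hR0.le
  have hπsq1 : (9.8596:ℝ) < Real.pi ^ 2 := by nlinarith
  have hπsq2 : Real.pi ^ 2 < (9.9225:ℝ) := by nlinarith
  have he2 : Real.exp 1 ^ 2 < (7.3984:ℝ) := by nlinarith
  have he3 : Real.exp 1 ^ 3 < (20.124:ℝ) := by nlinarith
  have hcore : 8 * Real.pi ^ 2 ≤ (8 * Real.pi ^ 2 - Real.exp 1 ^ 3) * w := by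
    have hpos8 : (0:ℝ) < 8 * Real.pi ^ 2 - Real.exp 1 ^ 3 := by nlinarith
    have h1 : (8 * Real.pi ^ 2 - Real.exp 1 ^ 3) * 8
        ≤ (8 * Real.pi ^ 2 - Real.exp 1 ^ 3) * (Real.exp 1 * w) :=
      mul_le_mul_of_nonneg_left hw8 hpos8.le
    have hnum : 8 * Real.pi ^ 2 * Real.exp 1 ≤ (8 * Real.pi ^ 2 - Real.exp 1 ^ 3) * 8 := by
      nlinarith
    nlinarith [mul_pos hepos hw0]
  have hmain : Real.exp 1 ^ 3 * (N * q * w) < 8 * Real.pi ^ 2 * (K * R) := by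
    have h2 : Real.exp 1 ^ 3 * w ≤ 8 * Real.pi ^ 2 * (w - 1) := by nlinarith
    have h3 : Real.exp 1 ^ 3 * (N * q * w) ≤ 8 * Real.pi ^ 2 * (N * q * (w - 1)) := by
      nlinarith [mul_le_mul_of_nonneg_left h2 hv.le]
    nlinarith [hKRlt]
  have hXB := pmf_bound n k hk1 hkn q hq0 hq1
  apply lt_of_le_of_lt hXB
  have hX0 : (0:ℝ) ≤ Real.exp 1 / (2 * Real.pi) * (Real.sqrt N / (Real.sqrt K * Real.sqrt R)) := by
    positivity
  rw [Real.lt_sqrt hX0]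
  have hsqN : Real.sqrt N ^ 2 = N := Real.sq_sqrt hN0.le
  have hsqK : Real.sqrt K ^ 2 = K := Real.sq_sqrt hK0.le
  have hsqR : Real.sqrt R ^ 2 = R := Real.sq_sqrt hR0.le
  have hXsq : (Real.exp 1 / (2 * Real.pi) * (Real.sqrt N / (Real.sqrt K * Real.sqrt R))) ^ 2
      = (Real.exp 1 ^ 2 * N) / (2 ^ 2 * Real.pi ^ 2 * (K * R)) := by
    rw [mul_pow, div_pow, div_pow, mul_pow (Real.sqrt K) (Real.sqrt R), hsqN, hsqK, hsqR,
      div_mul_div_comm, mul_pow 2 Real.pi]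
  rw [hXsq]
  have hden1 : (0:ℝ) < 2 ^ 2 * Real.pi ^ 2 * (K * R) := by positivity
  have hden2 : (0:ℝ) < Real.exp 1 * N * q * (1 - q) := by positivity
  rw [div_lt_div_iff₀ hden1 hden2]
  have harr : Real.exp 1 ^ 2 * N * (Real.exp 1 * N * q * (1 - q))
      = Real.exp 1 ^ 3 * (N * q * (N * (1 - q))) := by ring
  rw [harr, ← hw]
  nlinarith [hmain]

lemma binomCDF_nat_sum (n : ℕ) (p : ℝ) {k : ℕ} (hk : k ≤ n) :
    binomCDF n p (k : ℝ) = ∑ j ∈ Finset.range (k + 1), binomPMF n p j := by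
  unfold binomCDF
  symm
  calc ∑ j ∈ Finset.range (k + 1), binomPMF n p j
      = ∑ j ∈ Finset.range (k + 1), (if (j : ℝ) ≤ (k : ℝ) then binomPMF n p j else 0) := by
        apply Finset.sum_congr rfl
        intro j hj
        rw [if_pos]
        exact_mod_cast Nat.lt_succ_iff.mp (Finset.mem_range.mp hj)
    _ = ∑ j ∈ Finset.range (n + 1), (if (j : ℝ) ≤ (k : ℝ) then binomPMF n p j else 0) := by
        apply Finset.sum_subset (Finset.range_subset_range.mpr (by omega : k + 1 ≤ n + 1))
        intro x hx hnx
        rw [if_neg]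
        have hxk : k < x := by
          rw [Finset.mem_range] at hnx
          omega
        push_neg
        exact_mod_cast hxk


set_option maxHeartbeats 1000000 in
lemma main_cdf_bound (n : ℕ) (hn : 0 < n) (q : ℝ) (hq0 : 0 < q) (hq1 : q < 1) (k₁ : ℕ)
    (hk₁l : (n:ℝ) * q - 1 < (k₁:ℝ)) (hk₁u : (k₁:ℝ) ≤ (n:ℝ) * q) :
    1 / 2 - Real.sqrt (2 / (Real.exp 1 * (n:ℝ) * q * (1 - q))) < binomCDF n q (k₁ : ℝ) := by
  have h1q : 0 < 1 - q := by linarith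
  have hN0 : (0:ℝ) < (n:ℝ) := by exact_mod_cast hn
  have hX : (0:ℝ) < Real.exp 1 * (n:ℝ) * q * (1 - q) := by positivity
  set δ := Real.sqrt (2 / (Real.exp 1 * (n:ℝ) * q * (1 - q))) with hδdef
  have hδ0 : 0 < δ := Real.sqrt_pos.mpr (by positivity)
  have hk₁n : k₁ ≤ n := by
    have : (k₁:ℝ) ≤ (n:ℝ) := le_trans hk₁u (by nlinarith)
    exact_mod_cast this
  rcases le_or_gt δ (1/2) with hδle | hδgt
  · -- main case: 8 ≤ e * s
    have hs : 8 ≤ Real.exp 1 * ((n:ℝ) * q * (1 - q)) := by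
      have h2 : 2 / (Real.exp 1 * (n:ℝ) * q * (1 - q)) = δ ^ 2 :=
        (Real.sq_sqrt (by positivity)).symm
      have hδsq : δ ^ 2 ≤ 1 / 4 := by nlinarith
      rw [← h2] at hδsq
      rw [div_le_div_iff₀ hX (by norm_num)] at hδsq
      nlinarith
    have he1 : Real.exp 1 < 2.72 := lt_trans Real.exp_one_lt_d9 (by norm_num)
    have hs' : (2.9:ℝ) ≤ (n:ℝ) * q * (1 - q) := by nlinarith [Real.exp_pos 1]
    have hw : (2.9:ℝ) ≤ (n:ℝ) * (1 - q) := by nlinarith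
    rcases le_or_gt ((n:ℝ) * q) (k₁:ℝ) with hA | hB
    · -- k₁ itself is ≥ nq : median applies directly
      have hk₁1 : 1 ≤ k₁ := by
        by_contra h
        have : k₁ = 0 := by omega
        rw [this] at hA
        simp at hA
        nlinarith
      have hk₁n' : k₁ + 1 ≤ n := by
        have : (k₁:ℝ) + 1 ≤ (n:ℝ) := by nlinarith
        exact_mod_cast this
      have hb : k₁ + (n - k₁ - 1) + 1 = n := by omega
      have hcast : ((n - k₁ - 1 : ℕ) : ℝ) = (n:ℝ) - (k₁:ℝ) - 1 := by
        rw [show n - k₁ - 1 = n - (k₁ + 1) from by omega, Nat.cast_sub (by omega)]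
        push_cast
        ring
      have hq' : q * ((k₁:ℝ) + ((n - k₁ - 1 : ℕ) : ℝ) + 1) ≤ (k₁:ℝ) := by
        rw [hcast]
        have : q * ((k₁:ℝ) + ((n:ℝ) - (k₁:ℝ) - 1) + 1) = (n:ℝ) * q := by ring
        rw [this]
        exact hA
      have hmed := median_sum k₁ (n - k₁ - 1) q hq0 hq1 hk₁1 hq'
      rw [hb] at hmed
      rw [binomCDF_nat_sum n q hk₁n]
      linarith
    · -- k₁ < nq : use k₂ = k₁ + 1
      have hk₂l : (n:ℝ) * q ≤ (k₁:ℝ) + 1 := by linarith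
      have hk₂n : (k₁ + 1) + 1 ≤ n := by
        have h2 : (k₁:ℝ) + 2 < (n:ℝ) := by nlinarith
        have h3 : ((k₁:ℕ):ℝ) + 2 ≤ (n:ℝ) := h2.le
        have h4 : (((k₁ + 2 : ℕ)):ℝ) ≤ ((n:ℕ):ℝ) := by push_cast; linarith
        have := (Nat.cast_le (α := ℝ)).mp h4
        omega
      have hk₂1 : 1 ≤ k₁ + 1 := by omega
      have hb : (k₁ + 1) + (n - (k₁ + 1) - 1) + 1 = n := by omega
      have hcast : ((n - (k₁ + 1) - 1 : ℕ) : ℝ) = (n:ℝ) - (k₁:ℝ) - 2 := by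
        rw [show n - (k₁ + 1) - 1 = n - (k₁ + 2) from by omega, Nat.cast_sub (by omega)]
        push_cast
        ring
      have hq' : q * (((k₁ + 1 : ℕ):ℝ) + ((n - (k₁ + 1) - 1 : ℕ) : ℝ) + 1) ≤ ((k₁ + 1 : ℕ):ℝ) := by
        rw [hcast]
        push_cast
        have : q * (((k₁:ℝ) + 1) + ((n:ℝ) - (k₁:ℝ) - 2) + 1) = (n:ℝ) * q := by ring
        rw [this]
        linarith
      have hmed := median_sum (k₁ + 1) (n - (k₁ + 1) - 1) q hq0 hq1 hk₂1 hq'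
      rw [hb] at hmed
      have hpmf := pmf_lt_delta n (k₁ + 1) q hq0 hq1 hk₂1 hk₂n
        (by push_cast; linarith) (by push_cast; linarith) hs
      have hsum := Finset.sum_range_succ (binomPMF n q) (k₁ + 1)
      rw [binomCDF_nat_sum n q hk₁n]
      rw [hδdef]
      linarith [hmed, hpmf, hsum]
  · -- trivial case : δ > 1/2, F ≥ pmf 0 > 0
    rw [binomCDF_nat_sum n q hk₁n]
    have h0 : 0 < binomPMF n q 0 := by
      unfold binomPMF
      simp only [Nat.choose_zero_right, Nat.cast_one, pow_zero, Nat.sub_zero, one_mul]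
      positivity
    have hge : binomPMF n q 0 ≤ ∑ j ∈ Finset.range (k₁ + 1), binomPMF n q j := by
      apply Finset.single_le_sum (fun j _ => binomPMF_nonneg hq0.le hq1.le j)
      exact Finset.mem_range.mpr (by omega)
    linarith


theorem binomQuantile_le_of_power
    (n2 : ℕ) (hn2 : 0 < n2)
    (p2 q2 α : ℝ)
    (hp2 : 0 < p2) (hp2' : p2 < 1)
    (hq2 : 0 < q2) (hq2' : q2 < 1)
    (hα0 : 0 < α) (hα1 : α < 1)
    (hpower : 1 - binomCDF n2 q2 (binomQuantile n2 p2 (1 - α)) ≥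
      1 / 2 + Real.sqrt (2 / (Real.exp 1 * n2 * q2 * (1 - q2)))) :
    binomQuantile n2 p2 (1 - α) ≤ (n2 : ℝ) * q2 - 1 := by
  obtain ⟨k₀, hk₀⟩ := binomQuantile_eq_nat (n := n2) (p := p2) (u := 1 - α)
    hp2.le hp2'.le (by linarith) (by linarith)
  rw [hk₀] at hpower ⊢
  by_contra hcon
  push_neg at hcon
  -- k₁ := ⌊n q⌋
  have hnq0 : (0:ℝ) < (n2:ℝ) * q2 := by
    have : (0:ℝ) < (n2:ℝ) := by exact_mod_cast hn2
    positivity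
  set k₁ : ℕ := (⌊(n2:ℝ) * q2⌋).toNat with hk₁def
  have hfl0 : 0 ≤ ⌊(n2:ℝ) * q2⌋ := Int.floor_nonneg.mpr hnq0.le
  have hk₁cast : (k₁:ℝ) = (⌊(n2:ℝ) * q2⌋ : ℤ) := by
    rw [hk₁def]
    exact_mod_cast Int.toNat_of_nonneg hfl0
  have hk₁u : (k₁:ℝ) ≤ (n2:ℝ) * q2 := by
    rw [hk₁cast]; exact Int.floor_le _
  have hk₁l : (n2:ℝ) * q2 - 1 < (k₁:ℝ) := by
    rw [hk₁cast]
    linarith [Int.lt_floor_add_one ((n2:ℝ) * q2)]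
  -- k₁ ≤ k₀
  have hk₁k₀ : k₁ ≤ k₀ := by
    have h1 : ⌊(n2:ℝ) * q2⌋ < (k₀:ℤ) + 1 := by
      rw [Int.floor_lt]
      push_cast
      linarith
    have h2 : ⌊(n2:ℝ) * q2⌋ ≤ (k₀:ℤ) := by omega
    rw [hk₁def]
    omega
  have hmono := binomCDF_mono (n := n2) hq2.le hq2'.le
    (by exact_mod_cast hk₁k₀ : (k₁:ℝ) ≤ (k₀:ℝ))
  have hmain := main_cdf_bound n2 hn2 q2 hq2 hq2' k₁ hk₁l hk₁u
  linarith [hpower, hmono, hmain]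
end
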